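/- arXiv:1107.2435 — 6 statements merged into one kernel-verified Lean document; each statement's English description precedes it below -/
import Mathlib

section
/- Let g : [a,b] → ℝ, p > 0 and C > 0 be such that for every N ≥ 1 and every partition a = x_0 < x_1 < … < x_N = b one has Σ_{j=1}^N |g(x_j) − g(x_{j−1})| ≤ C (log(N+1))^p. Then for every q > p, g has finite Φ_q-variation on [a,b]. -/
set_option maxHeartbeats 1000000


open Set

/-- `Φ` is a gauge of the form `Φ_q`: a convex increasing function `[0,∞) → [0,∞)` with
`Φ(t) = t/(log(1/t))^q` for all sufficiently small `t > 0`. -/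
def IsVarGauge (q : ℝ) (Φ : ℝ → ℝ) : Prop :=
  ConvexOn ℝ (Ici 0) Φ ∧ MonotoneOn Φ (Ici 0) ∧ (∀ t : ℝ, 0 ≤ t → 0 ≤ Φ t) ∧
    ∃ t₀ > 0, ∀ t : ℝ, 0 < t → t ≤ t₀ → Φ t = t / Real.log (1 / t) ^ q

/-- `g` has finite `Φ`-variation on `[a, b]`: the sums `Σ Φ(|g(x_j) − g(x_{j−1})|)` over all
partitions `a = x₀ < x₁ < … < x_N = b` are uniformly bounded. -/
def HasFinitePhiVariationOn (Φ : ℝ → ℝ) (g : ℝ → ℝ) (a b : ℝ) : Prop :=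
  ∃ B : ℝ, ∀ (N : ℕ) (x : ℕ → ℝ), 1 ≤ N → x 0 = a → x N = b →
    (∀ j < N, x j < x (j + 1)) →
    ∑ j ∈ Finset.range N, Φ (|g (x (j + 1)) - g (x j)|) ≤ B

lemma aux_subset_sum (g : ℝ → ℝ) (a b : ℝ) (hab : a < b) (p C : ℝ) (hp : 0 ≤ p) (hC : 0 ≤ C)
    (h : ∀ (N : ℕ) (x : ℕ → ℝ), 1 ≤ N → x 0 = a → x N = b →
      (∀ j < N, x j < x (j + 1)) →
      ∑ j ∈ Finset.range N, |g (x (j + 1)) - g (x j)| ≤ C * Real.log (N + 1) ^ p) :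
    ∀ N : ℕ, ∀ x : ℕ → ℝ, x 0 = a → x N = b → (∀ j < N, x j < x (j + 1)) →
      ∀ T : Finset ℕ, T ⊆ Finset.range N →
      ∑ j ∈ T, |g (x (j + 1)) - g (x j)| ≤ C * Real.log (2 * T.card + 2) ^ p := by
  intro N
  induction N using Nat.strong_induction_on with
  | _ N ih =>
  intro x hx0 hxN hmono T hT
  by_cases hN : N ≤ 2 * T.card + 1
  · have hN1 : 1 ≤ N := by
      by_contra hc
      have : N = 0 := by omega
      rw [this] at hxN
      rw [hx0] at hxN
      exact absurd hxN (ne_of_lt hab)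
    have hcast : Real.log (N + 1) ≤ Real.log (2 * T.card + 2) := by
      apply Real.log_le_log (by positivity)
      have : (N:ℝ) ≤ 2*(T.card:ℝ)+1 := by exact_mod_cast hN
      push_cast
      linarith
    calc ∑ j ∈ T, |g (x (j+1)) - g (x j)|
        ≤ ∑ j ∈ Finset.range N, |g (x (j+1)) - g (x j)| :=
          Finset.sum_le_sum_of_subset_of_nonneg hT (fun _ _ _ => abs_nonneg _)
      _ ≤ C * Real.log (N+1) ^ p := h N x hN1 hx0 hxN hmono
      _ ≤ C * Real.log (2*T.card+2) ^ p := by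
          apply mul_le_mul_of_nonneg_left _ hC
          exact Real.rpow_le_rpow (Real.log_nonneg (by push_cast; linarith)) hcast hp
  · push_neg at hN
    -- find removable j₀
    have hex : ∃ j₀, 1 ≤ j₀ ∧ j₀ < N ∧ j₀ ∉ T ∧ j₀ - 1 ∉ T := by
      by_contra hc
      push_neg at hc
      set f : ℕ → ℕ := fun j => if j ∈ T then j else j - 1 with hf
      have hmem : ∀ j ∈ Finset.Ico 1 N, f j ∈ T := by
        intro j hj
        rw [Finset.mem_Ico] at hj
        by_cases hjT : j ∈ T
        · simp [hf, hjT]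
        · have := hc j hj.1 hj.2 hjT
          simp [hf, hjT, this]
      have himg : (Finset.Ico 1 N).image f ⊆ T := by
        intro t ht
        rw [Finset.mem_image] at ht
        obtain ⟨j, hj, rfl⟩ := ht
        exact hmem j hj
      have hfib : ∀ t ∈ (Finset.Ico 1 N).image f,
          ((Finset.Ico 1 N).filter (fun j => f j = t)).card ≤ 2 := by
        intro t _
        have hsub : (Finset.Ico 1 N).filter (fun j => f j = t) ⊆ {t, t+1} := by
          intro j hj
          rw [Finset.mem_filter] at hj
          obtain ⟨hj1, hj2⟩ := hj
          rw [Finset.mem_insert, Finset.mem_singleton]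
          by_cases hjT : j ∈ T
          · left; simp [hf, hjT] at hj2; omega
          · right; simp [hf, hjT] at hj2; rw [Finset.mem_Ico] at hj1; omega
        calc _ ≤ ({t, t+1} : Finset ℕ).card := Finset.card_le_card hsub
          _ ≤ 2 := Finset.card_insert_le _ _ |>.trans (by simp)
      have hcard := Finset.card_le_mul_card_image (Finset.Ico 1 N) 2 hfib
      have : N - 1 ≤ 2 * T.card := by
        have h1 : (Finset.Ico 1 N).card = N - 1 := by simp
        have h2 := Finset.card_le_card himg
        omega
      omega
    obtain ⟨j₀, hj1, hjN, hjT, hjT'⟩ := hex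
    set x' : ℕ → ℝ := fun i => if i < j₀ then x i else x (i+1) with hx'
    set e : ℕ → ℕ := fun j => if j < j₀ then j else j - 1 with he
    have hTne : ∀ j ∈ T, j ≠ j₀ ∧ j ≠ j₀ - 1 ∧ j < N := by
      intro j hj
      refine ⟨fun hh => hjT (hh ▸ hj), fun hh => hjT' (hh ▸ hj), ?_⟩
      have := hT hj; rwa [Finset.mem_range] at this
    have hNN : N - 1 < N := by omega
    have hx'0 : x' 0 = a := by simp only [hx']; rw [if_pos (by omega)]; exact hx0
    have hx'N : x' (N - 1) = b := by
      simp only [hx']; rw [if_neg (by omega)]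
      rw [show N - 1 + 1 = N by omega]; exact hxN
    have hmono' : ∀ i < N - 1, x' i < x' (i + 1) := by
      intro i hi
      simp only [hx']
      by_cases h1 : i + 1 < j₀
      · rw [if_pos (by omega), if_pos h1]; exact hmono i (by omega)
      · by_cases h2 : i < j₀
        · rw [if_pos h2, if_neg h1]
          exact (hmono i (by omega)).trans (hmono (i+1) (by omega))
        · rw [if_neg h2, if_neg h1]
          exact hmono (i+1) (by omega)
    have hinj : Set.InjOn e T := by
      intro j1 hj1' j2 hj2' hee
      have a1 := hTne j1 hj1'
      have a2 := hTne j2 hj2'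
      simp only [he] at hee
      split_ifs at hee <;> omega
    have hTsub : T.image e ⊆ Finset.range (N - 1) := by
      intro t ht
      rw [Finset.mem_image] at ht
      obtain ⟨j, hj, rfl⟩ := ht
      have := hTne j hj
      rw [Finset.mem_range]
      simp only [he]
      split_ifs <;> omega
    have hterm : ∀ j ∈ T, |g (x' (e j + 1)) - g (x' (e j))| = |g (x (j + 1)) - g (x j)| := by
      intro j hj
      obtain ⟨hne, hne', hjN'⟩ := hTne j hj
      simp only [he, hx']
      by_cases hlt : j < j₀
      · rw [if_pos hlt, if_pos (by omega), if_pos (by omega)]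
      · rw [if_neg hlt, if_neg (by omega), if_neg (by omega)]
        rw [show j - 1 + 1 = j by omega]
    have hsum : ∑ j' ∈ T.image e, |g (x' (j' + 1)) - g (x' j')| 
        = ∑ j ∈ T, |g (x (j + 1)) - g (x j)| := by
      rw [Finset.sum_image (fun x hx y hy hxy => hinj hx hy hxy)]
      exact Finset.sum_congr rfl hterm
    have hcard : (T.image e).card = T.card := Finset.card_image_of_injOn hinj
    have := ih (N - 1) hNN x' hx'0 hx'N hmono' (T.image e) hTsub
    rw [hsum, hcard] at this
    exact this

lemma aux_mvt (r : ℝ) (hr : 0 < r) (y : ℝ) (hy : 3 ≤ y) :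
    r * Real.log (y+1) ^ (-r-1) / (y+1) ≤ Real.log y ^ (-r) - Real.log (y+1) ^ (-r) ∧
    Real.log y ^ (-r) - Real.log (y+1) ^ (-r) ≤ r * Real.log y ^ (-r-1) / y := by
  set f : ℝ → ℝ := fun t => Real.log t ^ (-r) with hf
  set f' : ℝ → ℝ := fun t => t⁻¹ * (-r) * Real.log t ^ (-r - 1) with hf'
  have hderiv : ∀ t : ℝ, 2 ≤ t → HasDerivAt f (f' t) t := by
    intro t ht
    have hlog : Real.log t ≠ 0 := by
      have : (0:ℝ) < Real.log t := Real.log_pos (by linarith)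
      linarith
    exact (Real.hasDerivAt_log (by linarith)).rpow_const (Or.inl hlog)
  have hcont : ContinuousOn f (Icc y (y+1)) := by
    intro t ht
    exact ((hderiv t (by rcases ht with ⟨h1, _⟩; linarith)).continuousAt).continuousWithinAt
  obtain ⟨c, hc, hcc⟩ := exists_hasDerivAt_eq_slope f f' (by linarith : y < y + 1) hcont
    (fun t ht => hderiv t (by rcases ht with ⟨h1, _⟩; linarith))
  -- hcc : f' c = (f (y+1) - f y) / (y + 1 - y)
  have hyy : y + 1 - y = 1 := by ring
  rw [hyy, div_one] at hcc
  have hdiff : f y - f (y+1) = - f' c := by rw [hcc]; ring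
  obtain ⟨hc1, hc2⟩ := hc
  have hlogc : 1 ≤ Real.log c := by
    rw [show (1:ℝ) = Real.log (Real.exp 1) by simp]
    apply Real.log_le_log (Real.exp_pos 1)
    have := Real.exp_one_lt_d9
    linarith
  have hcpos : (0:ℝ) < c := by linarith
  have hfc : - f' c = r * Real.log c ^ (-r-1) / c := by
    simp only [hf']
    field_simp
  rw [hfc] at hdiff
  -- monotonicity facts
  have hly : 1 ≤ Real.log y := by
    rw [show (1:ℝ) = Real.log (Real.exp 1) by simp]
    apply Real.log_le_log (Real.exp_pos 1)
    have := Real.exp_one_lt_d9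
    linarith
  have hly1 : 1 ≤ Real.log (y+1) := by
    apply hly.trans
    exact Real.log_le_log (by linarith) (by linarith)
  constructor
  · rw [hdiff]
    apply div_le_div₀ (by positivity) _ (by linarith) (by linarith)
    apply mul_le_mul_of_nonneg_left _ hr.le
    apply Real.rpow_le_rpow_of_nonpos (by linarith)
      (Real.log_le_log hcpos (by linarith)) (by linarith)
  · rw [hdiff]
    apply div_le_div₀ (by positivity) _ (by linarith) (by linarith)
    apply mul_le_mul_of_nonneg_left _ hr.le
    apply Real.rpow_le_rpow_of_nonpos (by positivity)
      (Real.log_le_log (by linarith) (by linarith)) (by linarith)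

lemma aux_log_le (x ε : ℝ) (hx : 0 < x) (hε : 0 < ε) : Real.log x ≤ x ^ ε / ε := by
  have h1 : Real.log (x ^ ε) = ε * Real.log x := Real.log_rpow hx ε
  have h2 : Real.log (x ^ ε) ≤ x ^ ε - 1 := Real.log_le_sub_one_of_pos (Real.rpow_pos_of_pos hx ε)
  rw [le_div_iff₀ hε]
  nlinarith
lemma aux_one_le_log (x : ℝ) (hx : 4 ≤ x) : 1 ≤ Real.log x := by
  rw [show (1:ℝ) = Real.log (Real.exp 1) by simp]
  exact Real.log_le_log (Real.exp_pos 1) (by have := Real.exp_one_lt_d9; linarith)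

lemma aux_phi_zero (q : ℝ) (hq : 0 < q) (Φ : ℝ → ℝ) (hmono : MonotoneOn Φ (Ici 0))
    (hnonneg : ∀ t : ℝ, 0 ≤ t → 0 ≤ Φ t) (t₀ : ℝ) (ht₀ : 0 < t₀)
    (hform : ∀ t : ℝ, 0 < t → t ≤ t₀ → Φ t = t / Real.log (1/t) ^ q) : Φ 0 = 0 := by
  by_contra hne
  have hpos : 0 < Φ 0 := lt_of_le_of_ne (hnonneg 0 le_rfl) (Ne.symm hne)
  obtain ⟨n, hn⟩ := exists_nat_gt (max (max (1 / Φ 0) (1 / t₀)) 4)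
  have hn4 : (4:ℝ) ≤ n := le_of_lt (lt_of_le_of_lt (le_max_right _ _) hn)
  have hn0 : (0:ℝ) < n := by linarith
  have hnt : 1 / (n:ℝ) ≤ t₀ := by
    rw [div_le_iff₀ hn0]
    have h1 : 1 / t₀ < n := lt_of_le_of_lt ((le_max_right _ _).trans (le_max_left _ _)) hn
    rw [div_lt_iff₀ ht₀] at h1
    nlinarith
  have hnΦ : 1 / (n:ℝ) < Φ 0 := by
    rw [div_lt_iff₀ hn0]
    have h1 : 1 / Φ 0 < n := lt_of_le_of_lt ((le_max_left _ _).trans (le_max_left _ _)) hn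
    rw [div_lt_iff₀ hpos] at h1
    nlinarith
  have hlog : 1 ≤ Real.log (1 / (1 / (n:ℝ))) := by
    rw [one_div_one_div]
    rw [show (1:ℝ) = Real.log (Real.exp 1) by simp]
    exact Real.log_le_log (Real.exp_pos 1) (by have := Real.exp_one_lt_d9; linarith)
  have key : Φ (1 / (n:ℝ)) = (1 / (n:ℝ)) / Real.log (1 / (1 / (n:ℝ))) ^ q :=
    hform _ (by positivity) hnt
  have hle : Φ 0 ≤ Φ (1 / (n:ℝ)) :=
    hmono (mem_Ici.mpr le_rfl) (mem_Ici.mpr (by positivity)) (by positivity)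
  have hrpow : 1 ≤ Real.log (1 / (1 / (n:ℝ))) ^ q := Real.one_le_rpow hlog hq.le
  have : Φ (1 / (n:ℝ)) ≤ 1 / (n:ℝ) := by
    rw [key]
    exact div_le_self (by positivity) hrpow
  linarith

lemma aux_list_sum_getD : ∀ (l : List ℝ), l.sum = ∑ k ∈ Finset.range l.length, l.getD k 0 := by
  intro l
  induction l with
  | nil => simp
  | cons a t ih =>
    rw [List.sum_cons, List.length_cons, Finset.sum_range_succ']
    simp only [List.getD_cons_succ, List.getD_cons_zero]
    rw [← ih]
    ring

lemma aux_range_map (f : ℕ → ℝ) (N : ℕ) :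
    ((List.range N).map f).sum = ∑ j ∈ Finset.range N, f j := by
  induction N with
  | zero => simp
  | succ n ih =>
    rw [List.range_succ, List.map_append, List.sum_append, Finset.sum_range_succ, ih]
    simp

lemma aux_sorted (N : ℕ) (aF : ℕ → ℝ) :
    ∃ c : ℕ → ℝ,
      (∀ k, k < N → ∃ j, j < N ∧ c k = aF j) ∧
      (∀ i j : ℕ, i ≤ j → j < N → c j ≤ c i) ∧
      (∀ Φ : ℝ → ℝ, ∑ j ∈ Finset.range N, Φ (aF j) = ∑ k ∈ Finset.range N, Φ (c k)) ∧
      (∀ n, n ≤ N → ∃ T : Finset ℕ, T ⊆ Finset.range N ∧ T.card = n ∧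
        ∑ k ∈ Finset.range n, c k = ∑ j ∈ T, aF j) := by
  classical
  set l₀ : List ℝ := (List.range N).map aF with hl₀
  set l : List ℝ := Multiset.sort (↑l₀) (· ≥ ·) with hl
  have hcoe : (↑l : Multiset ℝ) = ↑l₀ := by rw [hl]; exact Multiset.sort_eq _ _
  have hperm : l.Perm l₀ := Multiset.coe_eq_coe.mp hcoe
  have hsorted : List.Pairwise (· ≥ ·) l := Multiset.pairwise_sort _ (· ≥ ·)
  have hlen : l.length = N := by rw [hperm.length_eq, hl₀, List.length_map, List.length_range]
  refine ⟨fun k => l.getD k 0, ?_, ?_, ?_, ?_⟩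
  · intro k hk
    have hk' : k < l.length := by omega
    have hmem : l.getD k 0 ∈ l := by
      rw [List.getD_eq_getElem l 0 hk']
      exact List.getElem_mem hk'
    have hmem0 : l.getD k 0 ∈ l₀ := hperm.mem_iff.mp hmem
    rw [hl₀, List.mem_map] at hmem0
    obtain ⟨j, hj, hja⟩ := hmem0
    rw [List.mem_range] at hj
    exact ⟨j, hj, hja.symm⟩
  · intro i j hij hj
    rcases eq_or_lt_of_le hij with rfl | hlt
    · exact le_refl _
    · have hi' : i < l.length := by omega
      have hj' : j < l.length := by omega
      show l.getD j 0 ≤ l.getD i 0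
      rw [List.getD_eq_getElem l 0 hi', List.getD_eq_getElem l 0 hj']
      exact hsorted.rel_get_of_lt (show (⟨i, hi'⟩ : Fin l.length) < ⟨j, hj'⟩ from hlt)
  · intro Φ
    have h1 : ∑ j ∈ Finset.range N, Φ (aF j) = (l₀.map Φ).sum := by
      rw [hl₀, List.map_map, aux_range_map]
      rfl
    have h2 : (l₀.map Φ).sum = (l.map Φ).sum := ((hperm.map Φ).sum_eq).symm
    have h3 : (l.map Φ).sum = ∑ k ∈ Finset.range N, Φ (l.getD k 0) := by
      rw [aux_list_sum_getD (l.map Φ), List.length_map, hlen]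
      apply Finset.sum_congr rfl
      intro k hk
      rw [Finset.mem_range] at hk
      have hk' : k < l.length := by omega
      rw [List.getD_eq_getElem _ 0 (by rw [List.length_map]; exact hk'),
        List.getElem_map, List.getD_eq_getElem l 0 hk']
    rw [h1, h2, h3]
  · intro n hn
    have htake : (l.take n).Subperm l₀ := ((List.take_sublist n l).subperm).trans hperm.subperm
    obtain ⟨l', hl'perm, hl'sub⟩ := htake
    obtain ⟨r, hr, rfl⟩ := List.sublist_map_iff.mp hl'sub
    have hrnodup : r.Nodup := hr.nodup (List.nodup_range (n := N))
    have hrn : (↑r : Multiset ℕ).Nodup := by exact_mod_cast hrnodup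
    refine ⟨(⟨(↑r : Multiset ℕ), hrn⟩ : Finset ℕ), ?_, ?_, ?_⟩
    · intro j hj
      rw [Finset.mem_mk, Multiset.mem_coe] at hj
      rw [Finset.mem_range, ← List.mem_range]
      exact hr.subset hj
    · have e1 : (Finset.mk (↑r : Multiset ℕ) hrn).card = r.length := by
        simp [Finset.card]
      rw [e1]
      have e2 : (r.map aF).length = (l.take n).length := hl'perm.length_eq
      rw [List.length_map, List.length_take] at e2
      rw [e2, min_eq_left (by omega)]
    · have e1 : ∑ j ∈ Finset.mk (↑r : Multiset ℕ) hrn, aF j = (r.map aF).sum := by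
        simp [Finset.sum]
      rw [e1, hl'perm.sum_eq]
      have e2 : (l.take n).sum = ∑ k ∈ Finset.range n, (l.take n).getD k 0 := by
        rw [aux_list_sum_getD (l.take n), List.length_take, min_eq_left (by omega)]
      rw [e2]
      apply Finset.sum_congr rfl
      intro k hk
      show l.getD k 0 = (l.take n).getD k 0
      rw [Finset.mem_range] at hk
      have hk1 : k < (l.take n).length := by
        rw [List.length_take]; omega
      have hk2 : k < l.length := by omega
      rw [List.getD_eq_getElem _ 0 hk1, List.getD_eq_getElem l 0 hk2]
      exact (List.getElem_take (xs := l)).symm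

lemma aux_tel (F : ℕ → ℝ) (m n : ℕ) (h : m ≤ n) :
    ∑ k ∈ Finset.Ico m n, (F (k+1) - F k) = F n - F m := by
  rw [Finset.sum_Ico_eq_sub _ h, Finset.sum_range_sub, Finset.sum_range_sub]; ring

lemma aux_analysis (p q C : ℝ) (hp : 0 < p) (hpq : p < q) (hC : 0 < C)
    (Φ : ℝ → ℝ) (hΦ : IsVarGauge q Φ) :
    ∃ B : ℝ, ∀ (N : ℕ) (c : ℕ → ℝ), (∀ k, k < N → 0 ≤ c k) →
      (∀ i j : ℕ, i ≤ j → j < N → c j ≤ c i) →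
      (∀ n, n ≤ N → ∑ k ∈ Finset.range n, c k ≤ C * Real.log (2 * n + 2) ^ p) →
      ∑ k ∈ Finset.range N, Φ (c k) ≤ B := by
  obtain ⟨hconv, hmono, hnonneg, t₀, ht₀, hform⟩ := hΦ
  have hq : 0 < q := hp.trans hpq
  have hΦ0 : Φ 0 = 0 := aux_phi_zero q hq Φ hmono hnonneg t₀ ht₀ hform
  set ε : ℝ := 1 / (4 * p) with hε
  have hεpos : 0 < ε := by positivity
  have hεp : ε * p = 1/4 := by rw [hε]; field_simp
  set A : ℝ := max (C * ε⁻¹ ^ p * 4 ^ ((1:ℝ)/4)) 1 with hA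
  have hA1 : 1 ≤ A := le_max_right _ _
  have hA0 : 0 < A := by linarith
  set K₀ : ℕ := ⌈A ^ (4:ℝ) + (1/t₀)^(2:ℝ)⌉₊ + 3 with hK
  set M : ℝ := C * Real.log 4 ^ p with hM
  have hM0 : 0 ≤ M := by
    have : 0 ≤ Real.log 4 := Real.log_nonneg (by norm_num)
    positivity
  have hΦM : 0 ≤ Φ M := hnonneg M hM0
  set C₃ : ℝ := C * 3^p * 2^q * q * (2^(q+2-p)/(q-p)) with hC₃
  have hC₃0 : 0 ≤ C₃ := by
    have h1 : (0:ℝ) < 3 ^ p := Real.rpow_pos_of_pos (by norm_num) p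
    have h2 : (0:ℝ) < 2 ^ q := Real.rpow_pos_of_pos (by norm_num) q
    have h3 : (0:ℝ) < 2 ^ (q+2-p) := Real.rpow_pos_of_pos (by norm_num) _
    have h4 : (0:ℝ) < q - p := by linarith
    positivity
  have h2pq : (0:ℝ) ≤ C * 2 ^ (p + q) := by
    have : (0:ℝ) < 2 ^ (p+q) := Real.rpow_pos_of_pos (by norm_num) _
    positivity
  refine ⟨K₀ * Φ M + C * 2^(p+q) + C₃, ?_⟩
  intro N c hc0 hcmono hcsum
  -- trivial case N = 0
  rcases Nat.eq_zero_or_pos N with rfl | hN1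
  · simp only [Finset.range_zero, Finset.sum_empty]
    positivity
  -- c k ≤ M for all k < N
  have hcM : ∀ k, k < N → c k ≤ M := by
    intro k hk
    have h1 : c k ≤ c 0 := hcmono 0 k (Nat.zero_le k) hk
    have h2 : c 0 ≤ M := by
      have := hcsum 1 hN1
      simp only [Finset.range_one, Finset.sum_singleton] at this
      calc c 0 ≤ C * Real.log (2 * (1:ℕ) + 2) ^ p := this
        _ = M := by norm_num [hM]
    linarith
  have hΦc : ∀ k, k < N → Φ (c k) ≤ Φ M := fun k hk =>
    hmono (mem_Ici.mpr (hc0 k hk)) (mem_Ici.mpr hM0) (hcM k hk)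
  have hΦc0 : ∀ k, k < N → 0 ≤ Φ (c k) := fun k hk => hnonneg _ (hc0 k hk)
  -- bound for an initial segment
  have hinit : ∀ m, m ≤ N → m ≤ K₀ → ∑ k ∈ Finset.range m, Φ (c k) ≤ K₀ * Φ M := by
    intro m hmN hmK
    calc ∑ k ∈ Finset.range m, Φ (c k) ≤ ∑ k ∈ Finset.range m, Φ M :=
          Finset.sum_le_sum (fun k hk => hΦc k (lt_of_lt_of_le (Finset.mem_range.mp hk) hmN))
      _ = m * Φ M := by rw [Finset.sum_const, Finset.card_range]; ring
      _ ≤ K₀ * Φ M := by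
          apply mul_le_mul_of_nonneg_right _ hΦM
          exact_mod_cast hmK
  by_cases hNK : N ≤ K₀
  · calc ∑ k ∈ Finset.range N, Φ (c k) ≤ K₀ * Φ M := hinit N le_rfl hNK
      _ ≤ _ := by linarith
  push_neg at hNK
  have hKN : K₀ ≤ N := hNK.le
  -- key quantities
  set w : ℕ → ℝ := fun k => 2^q * Real.log (k+1) ^ (-q) with hw
  set v : ℕ → ℝ := fun k => Real.log (k+1) ^ (p-q) with hv
  set s : ℕ → ℝ := fun n => ∑ k ∈ Finset.range n, c k with hs
  have hlogk : ∀ k : ℕ, 3 ≤ k → 1 ≤ Real.log ((k:ℝ)+1) := by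
    intro k hk
    apply aux_one_le_log
    have : (3:ℝ) ≤ (k:ℝ) := by exact_mod_cast hk
    linarith
  have hw0 : ∀ k : ℕ, 3 ≤ k → 0 ≤ w k := by
    intro k hk
    have h2 : (0:ℝ) < 2 ^ q := Real.rpow_pos_of_pos (by norm_num) q
    have hl : (0:ℝ) < Real.log ((k:ℝ)+1) := by linarith [hlogk k hk]
    simp only [hw]
    positivity
  have hK3 : 3 ≤ K₀ := by rw [hK]; omega
  -- constants comparisons at indices ≥ K₀
  have hKA : ∀ k : ℕ, K₀ ≤ k → A ≤ ((k:ℝ)+1) ^ ((1:ℝ)/4) ∧ 1/t₀ ≤ ((k:ℝ)+1) ^ ((1:ℝ)/2) := by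
    intro k hk
    have hk1 : A ^ (4:ℝ) + (1/t₀)^(2:ℝ) ≤ (k:ℝ) := by
      calc A ^ (4:ℝ) + (1/t₀)^(2:ℝ) ≤ (⌈A ^ (4:ℝ) + (1/t₀)^(2:ℝ)⌉₊ : ℝ) := Nat.le_ceil _
        _ ≤ (K₀:ℝ) := by rw [hK]; push_cast; linarith
        _ ≤ k := by exact_mod_cast hk
    have hApos : (0:ℝ) < A ^ (4:ℝ) := Real.rpow_pos_of_pos hA0 _
    have ht2 : (0:ℝ) < (1/t₀)^(2:ℝ) := Real.rpow_pos_of_pos (by positivity) _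
    constructor
    · have h1 : A ^ (4:ℝ) ≤ (k:ℝ)+1 := by linarith
      calc A = (A ^ (4:ℝ)) ^ ((1:ℝ)/4) := by
            rw [← Real.rpow_mul hA0.le, show (4:ℝ)*(1/4) = 1 by norm_num, Real.rpow_one]
        _ ≤ ((k:ℝ)+1) ^ ((1:ℝ)/4) := Real.rpow_le_rpow hApos.le h1 (by norm_num)
    · have h1 : (1/t₀) ^ (2:ℝ) ≤ (k:ℝ)+1 := by linarith
      calc 1/t₀ = ((1/t₀) ^ (2:ℝ)) ^ ((1:ℝ)/2) := by
            rw [← Real.rpow_mul (by positivity), show (2:ℝ)*(1/2) = 1 by norm_num, Real.rpow_one]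
        _ ≤ _ := Real.rpow_le_rpow ht2.le h1 (by norm_num)
  -- decay of c k
  have hck : ∀ k : ℕ, K₀ ≤ k → k < N → c k ≤ ((k:ℝ)+1) ^ (-(1:ℝ)/2) := by
    intro k hkK hkN
    have hkpos : (0:ℝ) < (k:ℝ)+1 := by positivity
    have h1 : ((k:ℝ)+1) * c k ≤ ∑ i ∈ Finset.range (k+1), c i := by
      have := Finset.card_nsmul_le_sum (Finset.range (k+1)) c (c k)
        (fun i hi => hcmono i k (Nat.lt_succ_iff.mp (Finset.mem_range.mp hi)) hkN)
      rwa [Finset.card_range, nsmul_eq_mul, Nat.cast_add, Nat.cast_one] at this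
    have h2 : ∑ i ∈ Finset.range (k+1), c i ≤ C * Real.log (2*((k:ℝ)+1)+2) ^ p := by
      have := hcsum (k+1) hkN
      push_cast at this
      convert this using 4 <;> push_cast <;> ring
    have hx : (0:ℝ) < 2*((k:ℝ)+1)+2 := by linarith
    have hlogpos : 0 ≤ Real.log (2*((k:ℝ)+1)+2) := Real.log_nonneg (by linarith)
    have l1 : Real.log (2*((k:ℝ)+1)+2) ≤ (4*((k:ℝ)+1)) ^ ε / ε := by
      calc Real.log (2*((k:ℝ)+1)+2) ≤ (2*((k:ℝ)+1)+2) ^ ε / ε := aux_log_le _ _ hx hεpos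
        _ ≤ (4*((k:ℝ)+1)) ^ ε / ε := by
            rw [div_le_div_iff₀ hεpos hεpos]
            apply mul_le_mul_of_nonneg_right _ hεpos.le
            exact Real.rpow_le_rpow hx.le (by linarith) hεpos.le
    have l2 : Real.log (2*((k:ℝ)+1)+2) ^ p ≤ ε⁻¹ ^ p * (4 ^ ((1:ℝ)/4) * ((k:ℝ)+1) ^ ((1:ℝ)/4)) := by
      calc Real.log (2*((k:ℝ)+1)+2) ^ p ≤ ((4*((k:ℝ)+1)) ^ ε / ε) ^ p :=
            Real.rpow_le_rpow hlogpos l1 hp.le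
        _ = ε⁻¹ ^ p * (4 ^ ((1:ℝ)/4) * ((k:ℝ)+1) ^ ((1:ℝ)/4)) := by
            rw [Real.div_rpow (by positivity) hεpos.le,
              ← Real.rpow_mul (show (0:ℝ) ≤ 4*((k:ℝ)+1) by positivity), hεp,
              Real.mul_rpow (by norm_num) (by positivity),
              div_eq_mul_inv, ← Real.inv_rpow hεpos.le]
            ring
    have h3 : ((k:ℝ)+1) * c k ≤ ((k:ℝ)+1) ^ ((1:ℝ)/2) := by
      have hA4 := (hKA k hkK).1
      calc ((k:ℝ)+1) * c k ≤ C * (ε⁻¹ ^ p * (4 ^ ((1:ℝ)/4) * ((k:ℝ)+1) ^ ((1:ℝ)/4))) := by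
            calc ((k:ℝ)+1) * c k ≤ C * Real.log (2*((k:ℝ)+1)+2) ^ p := le_trans h1 h2
              _ ≤ _ := mul_le_mul_of_nonneg_left l2 hC.le
        _ = (C * ε⁻¹ ^ p * 4 ^ ((1:ℝ)/4)) * ((k:ℝ)+1) ^ ((1:ℝ)/4) := by ring
        _ ≤ A * ((k:ℝ)+1) ^ ((1:ℝ)/4) :=
            mul_le_mul_of_nonneg_right (le_max_left _ _) (by positivity)
        _ ≤ ((k:ℝ)+1) ^ ((1:ℝ)/4) * ((k:ℝ)+1) ^ ((1:ℝ)/4) :=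
            mul_le_mul_of_nonneg_right hA4 (by positivity)
        _ = ((k:ℝ)+1) ^ ((1:ℝ)/2) := by
            rw [← Real.rpow_add hkpos]; norm_num
    rw [show (-(1:ℝ)/2) = (1:ℝ)/2 - 1 by norm_num, Real.rpow_sub hkpos, Real.rpow_one,
      le_div_iff₀ hkpos]
    linarith [h3]
  -- c k ≤ t₀
  have hckt : ∀ k : ℕ, K₀ ≤ k → k < N → c k ≤ t₀ := by
    intro k hkK hkN
    have h1 := hck k hkK hkN
    have h2 := (hKA k hkK).2
    have hpos : (0:ℝ) < ((k:ℝ)+1) ^ ((1:ℝ)/2) := Real.rpow_pos_of_pos (by positivity) _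
    have h3 : 1/(((k:ℝ)+1) ^ ((1:ℝ)/2)) ≤ 1/(1/t₀) :=
      one_div_le_one_div_of_le (by positivity) h2
    rw [one_div_one_div] at h3
    calc c k ≤ ((k:ℝ)+1) ^ (-(1:ℝ)/2) := h1
      _ = 1/(((k:ℝ)+1) ^ ((1:ℝ)/2)) := by
          rw [show (-(1:ℝ)/2) = -((1:ℝ)/2) by norm_num, Real.rpow_neg (by positivity)]
          exact (one_div _).symm
      _ ≤ t₀ := h3
  -- Φ (c k) ≤ c k * w k for k ≥ K₀
  have hΦw : ∀ k : ℕ, K₀ ≤ k → k < N → Φ (c k) ≤ c k * w k := by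
    intro k hkK hkN
    have hk3 : (3:ℕ) ≤ k := le_trans hK3 hkK
    have hlog1 : 1 ≤ Real.log ((k:ℝ)+1) := hlogk k hk3
    have hwk0 : 0 ≤ w k := hw0 k hk3
    rcases eq_or_lt_of_le (hc0 k hkN) with h0 | h0
    · rw [← h0, hΦ0]
      simp
    · have hform' := hform (c k) h0 (hckt k hkK hkN)
      have h1 : ((k:ℝ)+1) ^ ((1:ℝ)/2) ≤ 1 / c k := by
        rw [le_div_iff₀ h0]
        have hc := hck k hkK hkN
        calc ((k:ℝ)+1) ^ ((1:ℝ)/2) * c k ≤ ((k:ℝ)+1)^((1:ℝ)/2) * (((k:ℝ)+1) ^ (-(1:ℝ)/2)) :=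
              mul_le_mul_of_nonneg_left hc (by positivity)
          _ = 1 := by rw [← Real.rpow_add (by positivity)]; norm_num
      have h2 : (1:ℝ)/2 * Real.log ((k:ℝ)+1) ≤ Real.log (1 / c k) := by
        calc (1:ℝ)/2 * Real.log ((k:ℝ)+1) = Real.log (((k:ℝ)+1) ^ ((1:ℝ)/2)) :=
              (Real.log_rpow (by positivity) _).symm
          _ ≤ _ := Real.log_le_log (Real.rpow_pos_of_pos (by positivity) _) h1
      have hlq : ((1:ℝ)/2) ^ q * Real.log ((k:ℝ)+1) ^ q ≤ Real.log (1 / c k) ^ q := by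
        rw [← Real.mul_rpow (by norm_num) (by linarith)]
        exact Real.rpow_le_rpow (by positivity) h2 hq.le
      have hhalf : (0:ℝ) < ((1:ℝ)/2) ^ q := Real.rpow_pos_of_pos (by norm_num) q
      have hlkq : (0:ℝ) < Real.log ((k:ℝ)+1) ^ q :=
        Real.rpow_pos_of_pos (by linarith) q
      have hYpos : (0:ℝ) < ((1:ℝ)/2) ^ q * Real.log ((k:ℝ)+1) ^ q := by positivity
      rw [hform']
      calc c k / Real.log (1 / c k) ^ q ≤ c k / (((1:ℝ)/2) ^ q * Real.log ((k:ℝ)+1) ^ q) :=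
            div_le_div_of_nonneg_left h0.le hYpos hlq
        _ = c k * w k := by
            simp only [hw]
            rw [Real.rpow_neg (by linarith),
              show ((1:ℝ)/2) ^ q = ((2:ℝ) ^ q)⁻¹ by
                rw [show ((1:ℝ)/2) = (2:ℝ)⁻¹ by norm_num, Real.inv_rpow (by norm_num)]]
            field_simp
  -- w is decreasing
  have hwd0 : ∀ k : ℕ, 3 ≤ k → 0 ≤ w k - w (k+1) := by
    intro k hk
    have hy4 : (4:ℝ) ≤ (k:ℝ)+1 := by
      have : (3:ℝ) ≤ (k:ℝ) := by exact_mod_cast hk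
      linarith
    have hly : 1 ≤ Real.log ((k:ℝ)+1) := hlogk k hk
    have hly1 : 1 ≤ Real.log ((k:ℝ)+1+1) := by
      apply hly.trans (Real.log_le_log (by linarith) (by linarith))
    have hcast : ((k+1:ℕ):ℝ) + 1 = ((k:ℝ)+1) + 1 := by push_cast; ring
    simp only [hw, hcast]
    rw [← mul_sub]
    apply mul_nonneg (Real.rpow_pos_of_pos (by norm_num) q).le
    have h1 := (aux_mvt q hq ((k:ℝ)+1) (by linarith)).1
    have h2 : (0:ℝ) ≤ q * Real.log (((k:ℝ)+1)+1) ^ (-q-1) / (((k:ℝ)+1)+1) := by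
      have := Real.rpow_pos_of_pos (show (0:ℝ) < Real.log (((k:ℝ)+1)+1) by linarith) (-q-1)
      positivity
    linarith
  -- the summation-by-parts step bound
  have hstep : ∀ k : ℕ, 3 ≤ k →
      C * Real.log (2*((k:ℝ)+1)+2) ^ p * (w k - w (k+1)) ≤ C₃ * (v k - v (k+1)) := by
    intro k hk
    set y : ℝ := (k:ℝ)+1 with hy
    have hy4 : (4:ℝ) ≤ y := by
      have : (3:ℝ) ≤ (k:ℝ) := by exact_mod_cast hk
      rw [hy]; linarith
    have hypos : (0:ℝ) < y := by linarith
    have hly : 1 ≤ Real.log y := hlogk k hk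
    have hly1 : 1 ≤ Real.log (y+1) := by
      apply hly.trans (Real.log_le_log hypos (by linarith))
    have hcast : ((k+1:ℕ):ℝ) + 1 = y + 1 := by rw [hy]; push_cast; ring
    have mvt1 := (aux_mvt q hq y (by linarith)).2
    have mvt2 := (aux_mvt (q-p) (by linarith) y (by linarith)).1
    -- w difference
    have hwdiff : w k - w (k+1) ≤ 2^q * (q * Real.log y ^ (-q-1) / y) := by
      simp only [hw, hcast]
      rw [← mul_sub]
      apply mul_le_mul_of_nonneg_left mvt1 (Real.rpow_pos_of_pos (by norm_num) q).le
    have hwdiff0 : 0 ≤ w k - w (k+1) := by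
      simp only [hw, hcast]
      rw [← mul_sub]
      apply mul_nonneg (Real.rpow_pos_of_pos (by norm_num) q).le
      have := (aux_mvt q hq y (by linarith)).1
      have h2 : (0:ℝ) ≤ q * Real.log (y+1) ^ (-q-1) / (y+1) := by
        have := Real.rpow_pos_of_pos (show (0:ℝ) < Real.log (y+1) by linarith) (-q-1)
        positivity
      linarith
    -- L bound
    have hL : C * Real.log (2*y+2) ^ p ≤ C * 3^p * Real.log y ^ p := by
      have h1 : Real.log (2*y+2) ≤ 3 * Real.log y := by
        calc Real.log (2*y+2) ≤ Real.log (y ^ (3:ℝ)) := by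
              apply Real.log_le_log (by linarith)
              rw [show y ^ (3:ℝ) = y^(3:ℕ) by rw [← Real.rpow_natCast]; norm_num]
              have hyy : y^(3:ℕ) = y*y*y := by ring
              rw [hyy]; nlinarith [hy4]
          _ = 3 * Real.log y := Real.log_rpow hypos _
      calc C * Real.log (2*y+2) ^ p ≤ C * (3 * Real.log y) ^ p := by
            apply mul_le_mul_of_nonneg_left _ hC.le
            exact Real.rpow_le_rpow (Real.log_nonneg (by linarith)) h1 hp.le
        _ = C * 3^p * Real.log y ^ p := by
            rw [Real.mul_rpow (by norm_num) (by linarith)]; ring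
    have hLpos : 0 ≤ C * Real.log (2*y+2) ^ p := by
      have := Real.rpow_nonneg (Real.log_nonneg (show (1:ℝ) ≤ 2*y+2 by linarith)) p
      positivity
    -- v difference lower bound
    have hvdiff : (q-p) * (2:ℝ)^(p-q-2) * Real.log y ^ (p-q-1) / y ≤ v k - v (k+1) := by
      have e1 : v k - v (k+1) = Real.log y ^ (-(q-p)) - Real.log (y+1) ^ (-(q-p)) := by
        simp only [hv, hcast]
        rw [show -(q-p) = p - q by ring]
      rw [e1]
      refine le_trans ?_ mvt2
      rw [show -(q-p)-1 = p-q-1 by ring]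
      have h2 : Real.log (y+1) ≤ 2 * Real.log y := by
        calc Real.log (y+1) ≤ Real.log (y ^ (2:ℝ)) := by
              apply Real.log_le_log (by linarith)
              rw [show y ^ (2:ℝ) = y^(2:ℕ) by rw [← Real.rpow_natCast]; norm_num]
              nlinarith
          _ = 2 * Real.log y := Real.log_rpow hypos _
      have h3 : (2:ℝ)^(p-q-1) * Real.log y ^ (p-q-1) ≤ Real.log (y+1) ^ (p-q-1) := by
        rw [← Real.mul_rpow (by norm_num) (by linarith)]
        exact Real.rpow_le_rpow_of_nonpos (by linarith) h2 (by linarith)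
      have h4 : (1:ℝ)/(2*y) ≤ 1/(y+1) := one_div_le_one_div_of_le (by linarith) (by linarith)
      have hql : (0:ℝ) < q - p := by linarith
      calc (q-p) * (2:ℝ)^(p-q-2) * Real.log y ^ (p-q-1) / y
          = (q-p) * ((2:ℝ)^(p-q-1) * Real.log y ^ (p-q-1)) * (1/(2*y)) := by
            rw [show (2:ℝ)^(p-q-2) = (2:ℝ)^(p-q-1) * (2:ℝ)^(-(1:ℝ)) by
              rw [← Real.rpow_add (by norm_num)]; ring_nf]
            rw [Real.rpow_neg_one]
            field_simp
        _ ≤ (q-p) * Real.log (y+1) ^ (p-q-1) * (1/(y+1)) := by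
            apply mul_le_mul
            · exact mul_le_mul_of_nonneg_left h3 hql.le
            · exact h4
            · positivity
            · have := Real.rpow_pos_of_pos (show (0:ℝ) < Real.log (y+1) by linarith) (p-q-1)
              positivity
        _ = (q-p) * Real.log (y+1) ^ (p-q-1) / (y+1) := by ring
    -- combine
    calc C * Real.log (2*y+2) ^ p * (w k - w (k+1))
        ≤ (C * 3^p * Real.log y ^ p) * (2^q * (q * Real.log y ^ (-q-1) / y)) := by
          apply mul_le_mul hL hwdiff hwdiff0
          have h1 : (0:ℝ) < 3^p := Real.rpow_pos_of_pos (by norm_num) p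
          have h2 : (0:ℝ) ≤ Real.log y ^ p := Real.rpow_nonneg (by linarith) p
          positivity
      _ = C * 3^p * 2^q * q * (Real.log y ^ (p-q-1) / y) := by
          rw [show Real.log y ^ (p-q-1) = Real.log y ^ p * Real.log y ^ (-q-1) by
            rw [← Real.rpow_add (by linarith : (0:ℝ) < Real.log y)]; ring_nf]
          ring
      _ ≤ C₃ * (v k - v (k+1)) := by
          rw [hC₃]
          have key : C * 3^p * 2^q * q * (Real.log y ^ (p-q-1) / y)
              = (C * 3^p * 2^q * q * (2^(q+2-p)/(q-p))) * ((q-p) * (2:ℝ)^(p-q-2) * Real.log y ^ (p-q-1) / y) := by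
            have hql : (q:ℝ) - p ≠ 0 := by linarith
            have h22 : (2:ℝ)^(q+2-p) * (2:ℝ)^(p-q-2) = 1 := by
              rw [← Real.rpow_add (by norm_num),
                show q+2-p+(p-q-2) = 0 by ring, Real.rpow_zero]
            have h23 : (2:ℝ)^(q+2-p)/(q-p) * ((q-p) * (2:ℝ)^(p-q-2)) = 1 := by
              field_simp
              linear_combination h22
            calc C * 3^p * 2^q * q * (Real.log y ^ (p-q-1) / y)
                = (C * 3^p * 2^q * q) * 1 * (Real.log y ^ (p-q-1) / y) := by ring
              _ = (C * 3^p * 2^q * q) * ((2:ℝ)^(q+2-p)/(q-p) * ((q-p) * (2:ℝ)^(p-q-2))) * (Real.log y ^ (p-q-1) / y) := by rw [h23]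
              _ = (C * 3^p * 2^q * q * (2^(q+2-p)/(q-p))) * ((q-p) * (2:ℝ)^(p-q-2) * Real.log y ^ (p-q-1) / y) := by ring
          rw [key]
          apply mul_le_mul_of_nonneg_left hvdiff
          rw [← hC₃]; exact hC₃0
  -- Abel summation over Ico K₀ N
  have htel2 : ∑ k ∈ Finset.Ico K₀ N, (v k - v (k+1)) = v K₀ - v N := by
    have h := aux_tel (fun k => -v k) K₀ N hKN
    simp only [neg_sub_neg] at h
    linarith [h]
  have hswsum : ∑ k ∈ Finset.Ico K₀ N, s (k+1) * (w k - w (k+1)) ≤ C₃ * (v K₀ - v N) := by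
    calc ∑ k ∈ Finset.Ico K₀ N, s (k+1) * (w k - w (k+1))
        ≤ ∑ k ∈ Finset.Ico K₀ N, C₃ * (v k - v (k+1)) := by
          apply Finset.sum_le_sum
          intro k hk
          rw [Finset.mem_Ico] at hk
          have hk3 : 3 ≤ k := le_trans hK3 hk.1
          have hsL : s (k+1) ≤ C * Real.log (2*((k:ℝ)+1)+2) ^ p := by
            have h := hcsum (k+1) hk.2
            simp only [hs]
            convert h using 4
            push_cast
            ring
          calc s (k+1) * (w k - w (k+1))
              ≤ (C * Real.log (2*((k:ℝ)+1)+2) ^ p) * (w k - w (k+1)) :=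
                mul_le_mul_of_nonneg_right hsL (hwd0 k hk3)
            _ ≤ C₃ * (v k - v (k+1)) := hstep k hk3
      _ = C₃ * (v K₀ - v N) := by rw [← Finset.mul_sum, htel2]
  have habel : ∑ k ∈ Finset.Ico K₀ N, c k * w k ≤ s N * w N + C₃ * (v K₀ - v N) := by
    have hid : ∀ k ∈ Finset.Ico K₀ N, c k * w k
        = ((fun j => s j * w j) (k+1) - (fun j => s j * w j) k) + s (k+1) * (w k - w (k+1)) := by
      intro k hk
      have hsk : s (k+1) = s k + c k := Finset.sum_range_succ c k
      simp only []
      rw [hsk]; ring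
    rw [Finset.sum_congr rfl hid, Finset.sum_add_distrib]
    rw [aux_tel (fun j => s j * w j) K₀ N hKN]
    have hsK0 : 0 ≤ s K₀ * w K₀ := by
      apply mul_nonneg _ (hw0 K₀ hK3)
      exact Finset.sum_nonneg (fun i hi => hc0 i (lt_of_lt_of_le (Finset.mem_range.mp hi) hKN))
    linarith [hswsum]
  -- bound on s N * w N
  have hN3 : 3 ≤ N := le_trans hK3 hKN
  have hlogN : 1 ≤ Real.log ((N:ℝ)+1) := hlogk N hN3
  have hsN : s N * w N ≤ C * 2^(p+q) := by
    have hsLe : s N ≤ C * Real.log (2*(N:ℝ)+2) ^ p := hcsum N le_rfl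
    have hlog2N : Real.log (2*(N:ℝ)+2) ≤ 2 * Real.log ((N:ℝ)+1) := by
      calc Real.log (2*(N:ℝ)+2) ≤ Real.log (((N:ℝ)+1) ^ (2:ℝ)) := by
            apply Real.log_le_log (by positivity)
            rw [show ((N:ℝ)+1) ^ (2:ℝ) = ((N:ℝ)+1)^(2:ℕ) by rw [← Real.rpow_natCast]; norm_num]
            have h1 : (1:ℝ) ≤ (N:ℝ) := by exact_mod_cast hN1
            nlinarith
        _ = 2 * Real.log ((N:ℝ)+1) := Real.log_rpow (by positivity) _
    have hlg0 : 0 ≤ Real.log (2*(N:ℝ)+2) := Real.log_nonneg (by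
      have h1 : (0:ℝ) ≤ (N:ℝ) := Nat.cast_nonneg N
      linarith)
    have h2p : (0:ℝ) < 2^p := Real.rpow_pos_of_pos (by norm_num) p
    have h2q : (0:ℝ) < 2^q := Real.rpow_pos_of_pos (by norm_num) q
    calc s N * w N ≤ (C * Real.log (2*(N:ℝ)+2) ^ p) * w N :=
          mul_le_mul_of_nonneg_right hsLe (hw0 N hN3)
      _ ≤ (C * (2 * Real.log ((N:ℝ)+1)) ^ p) * (2^q * Real.log ((N:ℝ)+1) ^ (-q)) := by
          apply mul_le_mul_of_nonneg_right _ (by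
            have := Real.rpow_pos_of_pos (show (0:ℝ) < Real.log ((N:ℝ)+1) by linarith) (-q)
            positivity)
          apply mul_le_mul_of_nonneg_left _ hC.le
          exact Real.rpow_le_rpow hlg0 hlog2N hp.le
      _ = C * 2^p * 2^q * (Real.log ((N:ℝ)+1) ^ p * Real.log ((N:ℝ)+1) ^ (-q)) := by
          rw [Real.mul_rpow (by norm_num) (by linarith)]; ring
      _ = C * 2^p * 2^q * Real.log ((N:ℝ)+1) ^ (p + -q) := by
          rw [← Real.rpow_add (by linarith : (0:ℝ) < Real.log ((N:ℝ)+1))]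
      _ ≤ C * 2^p * 2^q * 1 := by
          apply mul_le_mul_of_nonneg_left
            (Real.rpow_le_one_of_one_le_of_nonpos hlogN (by linarith))
          positivity
      _ = C * 2^(p+q) := by rw [Real.rpow_add (by norm_num : (0:ℝ) < 2)]; ring
  -- final combination
  have hsplit : ∑ k ∈ Finset.range N, Φ (c k)
      = ∑ k ∈ Finset.range K₀, Φ (c k) + ∑ k ∈ Finset.Ico K₀ N, Φ (c k) := by
    rw [Finset.range_eq_Ico, ← Finset.sum_Ico_consecutive _ (Nat.zero_le K₀) hKN,
      ← Finset.range_eq_Ico]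
  have hIco : ∑ k ∈ Finset.Ico K₀ N, Φ (c k) ≤ ∑ k ∈ Finset.Ico K₀ N, c k * w k :=
    Finset.sum_le_sum (fun k hk => by
      rw [Finset.mem_Ico] at hk; exact hΦw k hk.1 hk.2)
  have hvK1 : v K₀ ≤ 1 := Real.rpow_le_one_of_one_le_of_nonpos (hlogk K₀ hK3) (by linarith)
  have hvN0 : 0 ≤ v N := Real.rpow_nonneg (by linarith [hlogk N hN3]) _
  have hC₃v : C₃ * (v K₀ - v N) ≤ C₃ := by nlinarith [hC₃0, hvK1, hvN0]
  have h1 := hinit K₀ hKN le_rfl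
  rw [hsplit]
  linarith [habel, hsN, hIco, h1, hC₃v]

/-- If the sums `Σ |g(x_j) − g(x_{j−1})|` over all `N`-point partitions of `[a, b]` are
bounded by `C (log(N+1))^p`, then `g` has finite `Φ_q`-variation for every `q > p`. -/
theorem finite_phi_variation_of_log_partition_bound
    (g : ℝ → ℝ) (a b : ℝ) (hab : a < b) (p C : ℝ) (hp : 0 < p) (hC : 0 < C)
    (h : ∀ (N : ℕ) (x : ℕ → ℝ), 1 ≤ N → x 0 = a → x N = b →
      (∀ j < N, x j < x (j + 1)) →
      ∑ j ∈ Finset.range N, |g (x (j + 1)) - g (x j)| ≤ C * Real.log (N + 1) ^ p) :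
    ∀ q : ℝ, p < q → ∀ Φ : ℝ → ℝ, IsVarGauge q Φ → HasFinitePhiVariationOn Φ g a b := by
  intro q hpq Φ hΦ
  obtain ⟨B, hB⟩ := aux_analysis p q C hp hpq hC Φ hΦ
  refine ⟨B, ?_⟩
  intro N x hN hx0 hxN hmono
  have hsub := aux_subset_sum g a b hab p C hp.le hC.le h N x hx0 hxN hmono
  obtain ⟨c, hmem, hanti, hsumeq, hpart⟩ := aux_sorted N (fun j => |g (x (j + 1)) - g (x j)|)
  have heq := hsumeq Φ
  rw [heq]
  apply hB N c
  · intro k hk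
    obtain ⟨j, hj, hcj⟩ := hmem k hk
    rw [hcj]
    exact abs_nonneg _
  · exact hanti
  · intro n hn
    obtain ⟨T, hTsub, hTcard, hTsum⟩ := hpart n hn
    have h2 := hsub T hTsub
    rw [hTcard] at h2
    rw [hTsum]
    exact h2
end

section
/- Let μ be a nonatomic positive Radon measure on ℝ and let g : ℝ → ℝ be a continuous function satisfying |g(x+h) − 2g(x) + g(x−h)| ≤ M μ([x−h, x+h]) for all x ∈ ℝ and h ≥ 0. Then for all a < b and all x ∈ [a,b], |g(x) − g_{ab}(x)| ≤ M μ([a,b]), where g_{ab}(x) = ((b−x)/(b−a)) g(a) + ((x−a)/(b−a)) g(b) is the affine function agreeing with g at a and b. -/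
open MeasureTheory Set

/-- Maximum principle helper: if `F` is continuous, vanishes at `a` and `b`, and its
second differences (over subintervals of `[a,b]`) are bounded below by `-K`, then
`F ≤ K` on `[a,b]`. -/
lemma genZygmund_aux (a b : ℝ) (hab : a < b) (K : ℝ) (F : ℝ → ℝ) (hF : Continuous F)
    (hFa : F a = 0) (hFb : F b = 0)
    (hsec : ∀ x h : ℝ, 0 ≤ h → a ≤ x - h → x + h ≤ b →
      -K ≤ F (x + h) - 2 * F x + F (x - h)) :
    ∀ y ∈ Icc a b, F y ≤ K := by
  obtain ⟨c, hc, hmax⟩ :=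
    isCompact_Icc.exists_isMaxOn (nonempty_Icc.2 hab.le) hF.continuousOn
  have hca : a ≤ c := hc.1
  have hcb : c ≤ b := hc.2
  intro y hy
  have hyc : F y ≤ F c := hmax hy
  suffices hFc : F c ≤ K by linarith
  by_cases hcase : c - a ≤ b - c
  · have hs := hsec c (c - a) (by linarith) (by linarith) (by linarith)
    have h1 : F (c + (c - a)) ≤ F c := hmax (by constructor <;> [linarith; linarith])
    have h2 : F (c - (c - a)) = 0 := by
      rw [show c - (c - a) = a by ring, hFa]
    linarith
  · have hs := hsec c (b - c) (by linarith) (by linarith) (by linarith)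
    have h1 : F (c - (b - c)) ≤ F c := hmax (by constructor <;> [linarith; linarith])
    have h2 : F (c + (b - c)) = 0 := by
      rw [show c + (b - c) = b by ring, hFb]
    linarith

/-- If `g` satisfies the generalized Zygmund condition with constant `M` relative to a
nonatomic Radon measure `μ`, then on every interval `[a, b]` the deviation of `g` from the
affine interpolant `g_{ab}` is at most `M μ([a, b])`. -/
theorem genZygmund_affine_deviation
    (μ : Measure ℝ) [IsLocallyFiniteMeasure μ] (hna : ∀ x : ℝ, μ {x} = 0)
    (g : ℝ → ℝ) (hg : Continuous g) (M : ℝ) (hM : 0 < M)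
    (hzyg : ∀ x h : ℝ, 0 ≤ h →
      |g (x + h) - 2 * g x + g (x - h)| ≤ M * (μ (Icc (x - h) (x + h))).toReal) :
    ∀ a b x : ℝ, a < b → x ∈ Icc a b →
      |g x - ((b - x) / (b - a) * g a + (x - a) / (b - a) * g b)| ≤
        M * (μ (Icc a b)).toReal := by
  intro a b x hab hx
  have hba : b - a ≠ 0 := by linarith
  set L : ℝ → ℝ := fun t => (b - t) / (b - a) * g a + (t - a) / (b - a) * g b with hL
  set F : ℝ → ℝ := fun t => g t - L t with hFdef
  have hFcont : Continuous F := by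
    apply hg.sub
    fun_prop
  have hFa : F a = 0 := by
    simp only [hFdef, hL]
    field_simp
    ring
  have hFb : F b = 0 := by
    simp only [hFdef, hL]
    field_simp
    ring
  set K : ℝ := M * (μ (Icc a b)).toReal with hK
  have hfin : μ (Icc a b) ≠ ⊤ := (isCompact_Icc.measure_lt_top (μ := μ)).ne
  -- the key second-difference bound for F restricted to [a,b]
  have hsec : ∀ x h : ℝ, 0 ≤ h → a ≤ x - h → x + h ≤ b →
      |F (x + h) - 2 * F x + F (x - h)| ≤ K := by
    intro x h hh h1 h2
    have heq : F (x + h) - 2 * F x + F (x - h)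
        = g (x + h) - 2 * g x + g (x - h) := by
      simp only [hFdef, hL]
      field_simp
      ring
    rw [heq]
    refine (hzyg x h hh).trans ?_
    rw [hK]
    exact mul_le_mul_of_nonneg_left
      (ENNReal.toReal_mono hfin (measure_mono (Icc_subset_Icc h1 h2))) hM.le
  have hupper := genZygmund_aux a b hab K F hFcont hFa hFb
    (fun x h hh h1 h2 => neg_le_of_abs_le (hsec x h hh h1 h2))
  have hlower := genZygmund_aux a b hab K (fun t => -F t) (hFcont.neg) (by simp [hFa])
    (by simp [hFb])
    (fun x h hh h1 h2 => by
      have := abs_le.1 (hsec x h hh h1 h2)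
      linarith [this.1, this.2])
  have h1 := hupper x hx
  have h2 := hlower x hx
  simp only [hFdef, hL] at h1 h2
  rw [abs_le]
  exact ⟨by linarith, by linarith⟩
end

section
/- Let g : ℝ → ℝ belong to the Zygmund class Λ_* with seminorm at most M. Then there exists a constant C, depending only on M, such that for every triple a < x < b one has (g(x) − g(a))²/(x − a) + (g(x) − g(b))²/(b − x) ≤ (g(b) − g(a))²/(b − a) + C (b − a). -/
open Set Filter Topology

private def zygD (g : ℝ → ℝ) (y H : ℝ) : ℝ → ℝ :=
  fun t => H * (g (y + t) - g y) - t * (g (y + H) - g y)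

private lemma zyg_chord (g : ℝ → ℝ) (M : ℝ) (hM : 0 ≤ M) (hg : Continuous g)
    (hZ : ∀ x h : ℝ, 0 < h → |g (x + h) - 2 * g x + g (x - h)| ≤ 2 * M * h)
    (y H : ℝ) (hH : 0 < H) :
    ∀ t, 0 ≤ t → t ≤ H → |zygD g y H t| ≤ M * H ^ 2 := by
  have hDcont : Continuous (zygD g y H) := by
    unfold zygD; fun_prop
  have mid : ∀ c e : ℝ, 0 < e →
      |zygD g y H c| ≤ (|zygD g y H (c - e)| + |zygD g y H (c + e)|) / 2 + M * H * e := by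
    intro c e he
    have hz := hZ (y + c) e he
    have key : zygD g y H (c - e) + zygD g y H (c + e) - 2 * zygD g y H c
        = H * (g (y + c + e) - 2 * g (y + c) + g (y + c - e)) := by
      have e1 : y + (c + e) = y + c + e := by ring
      have e2 : y + (c - e) = y + c - e := by ring
      unfold zygD
      rw [e1, e2]; ring
    have h1 : |zygD g y H (c - e) + zygD g y H (c + e) - 2 * zygD g y H c|
        ≤ H * (2 * M * e) := by
      rw [key, abs_mul, abs_of_pos hH]
      exact mul_le_mul_of_nonneg_left hz hH.le
    have h2 : |2 * zygD g y H c| ≤ |zygD g y H (c - e)| + |zygD g y H (c + e)| + H * (2*M*e) := by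
      calc |2 * zygD g y H c|
          = |(zygD g y H (c - e) + zygD g y H (c + e)) -
              (zygD g y H (c - e) + zygD g y H (c + e) - 2 * zygD g y H c)| := by
            ring_nf
        _ ≤ |zygD g y H (c - e) + zygD g y H (c + e)| +
              |zygD g y H (c - e) + zygD g y H (c + e) - 2 * zygD g y H c| := abs_sub _ _
        _ ≤ |zygD g y H (c - e)| + |zygD g y H (c + e)| + H * (2*M*e) := by
            have := abs_add_le (zygD g y H (c - e)) (zygD g y H (c + e))
            linarith
    rw [abs_mul] at h2
    simp only [abs_two] at h2
    nlinarith [abs_nonneg (zygD g y H c)]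
  have dyadic : ∀ n : ℕ, ∀ j : ℕ, j ≤ 2 ^ n →
      |zygD g y H ((j : ℝ) * H / 2 ^ n)| ≤ M * H ^ 2 * (1 - (1/2 : ℝ) ^ n) := by
    intro n
    induction n with
    | zero =>
      intro j hj
      interval_cases j
      · simp [zygD]
      · have hv : ((1:ℕ):ℝ) * H / 2 ^ 0 = H := by push_cast; norm_num
        rw [hv]
        have : zygD g y H H = 0 := by unfold zygD; ring
        simp [this]
    | succ n ih =>
      intro j hj
      rcases Nat.even_or_odd j with ⟨k, hk⟩ | ⟨k, hk⟩
      · subst hk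
        have hk2 : k ≤ 2 ^ n := by
          have : 2 ^ (n+1) = 2 ^ n + 2 ^ n := by ring
          omega
        have harg : ((k + k : ℕ) : ℝ) * H / 2 ^ (n+1) = (k : ℝ) * H / 2 ^ n := by
          push_cast
          field_simp
          ring
        rw [harg]
        refine (ih k hk2).trans ?_
        have hmono : (1/2:ℝ)^(n+1) ≤ (1/2:ℝ)^n := by
          apply pow_le_pow_of_le_one <;> norm_num
        nlinarith [mul_nonneg hM (sq_nonneg H)]
      · subst hk
        have hk2 : k + 1 ≤ 2 ^ n := by
          have : 2 ^ (n+1) = 2 ^ n + 2 ^ n := by ring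
          omega
        have hepos : (0:ℝ) < H / 2 ^ (n+1) := by positivity
        have h1 : ((2*k+1 : ℕ):ℝ) * H / 2^(n+1) - H / 2^(n+1) = (k:ℝ) * H / 2^n := by
          push_cast; field_simp; ring
        have h2 : ((2*k+1 : ℕ):ℝ) * H / 2^(n+1) + H / 2^(n+1) = ((k+1:ℕ):ℝ) * H / 2^n := by
          push_cast; field_simp; ring
        have hm := mid (((2*k+1 : ℕ):ℝ) * H / 2^(n+1)) (H / 2^(n+1)) hepos
        rw [h1, h2] at hm
        have ihk := ih k (by omega)
        have ihk1 := ih (k+1) hk2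
        have heq : M * H * (H / 2^(n+1)) = M * H^2 * (1/2:ℝ)^(n+1) := by
          rw [div_eq_mul_inv, one_div, inv_pow]
          ring
        have hhalf : (1/2:ℝ)^n = 2 * (1/2:ℝ)^(n+1) := by
          rw [pow_succ]; ring
        rw [hhalf] at ihk ihk1
        refine hm.trans ?_
        rw [heq]
        linarith
  intro t ht0 htH
  -- approximate t by dyadic points
  have key : ∀ n : ℕ, |zygD g y H ((⌊t * 2 ^ n / H⌋₊ : ℝ) * H / 2 ^ n)| ≤ M * H ^ 2 := by
    intro n
    have hle : t * 2 ^ n / H ≤ ((2 ^ n : ℕ) : ℝ) := by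
      rw [div_le_iff₀ hH]
      push_cast
      calc t * 2^n ≤ H * 2^n := by gcongr
        _ = 2^n * H := by ring
    have hj : ⌊t * 2 ^ n / H⌋₊ ≤ 2 ^ n := by
      have h := Nat.floor_le_floor hle
      rwa [Nat.floor_natCast] at h
    refine (dyadic n _ hj).trans ?_
    have : (0:ℝ) < (1/2:ℝ)^n := by positivity
    nlinarith [mul_nonneg hM (sq_nonneg H)]
  have hseq : Tendsto (fun n : ℕ => (⌊t * 2 ^ n / H⌋₊ : ℝ) * H / 2 ^ n) atTop (nhds t) := by
    have hub : ∀ n : ℕ, (⌊t * 2 ^ n / H⌋₊ : ℝ) * H / 2 ^ n ≤ t := by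
      intro n
      have h0 : (0:ℝ) ≤ t * 2 ^ n / H := by positivity
      have hfl := Nat.floor_le h0
      calc (⌊t * 2 ^ n / H⌋₊ : ℝ) * H / 2 ^ n ≤ (t * 2^n / H) * H / 2^n := by
            rw [div_le_div_iff_of_pos_right (by positivity : (0:ℝ) < 2^n)]
            exact mul_le_mul_of_nonneg_right hfl hH.le
        _ = t := by field_simp
    have hlb : ∀ n : ℕ, t - H * (1/2:ℝ)^n ≤ (⌊t * 2 ^ n / H⌋₊ : ℝ) * H / 2 ^ n := by
      intro n
      have := Nat.lt_floor_add_one (t * 2 ^ n / H)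
      have h2 : t * 2^n / H * H / 2^n ≤ ((⌊t * 2 ^ n / H⌋₊ : ℝ) + 1) * H / 2^n := by
        rw [div_le_div_iff_of_pos_right (by positivity : (0:ℝ) < 2^n)]
        exact mul_le_mul_of_nonneg_right this.le hH.le
      have h3 : t * 2^n / H * H / 2^n = t := by field_simp
      have h4 : ((⌊t * 2 ^ n / H⌋₊ : ℝ) + 1) * H / 2^n
          = (⌊t * 2 ^ n / H⌋₊ : ℝ) * H / 2^n + H * (1/2:ℝ)^n := by
        rw [one_div, inv_pow]; ring
      rw [h3, h4] at h2
      linarith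
    have hltend : Tendsto (fun n : ℕ => t - H * (1/2:ℝ)^n) atTop (nhds t) := by
      have : Tendsto (fun n : ℕ => (1/2:ℝ)^n) atTop (nhds 0) := by
        apply tendsto_pow_atTop_nhds_zero_of_lt_one <;> norm_num
      have := this.const_mul H
      simpa using tendsto_const_nhds.sub this
    exact tendsto_of_tendsto_of_tendsto_of_le_of_le hltend tendsto_const_nhds hlb hub
  have hlim : Tendsto (fun n : ℕ => |zygD g y H ((⌊t * 2 ^ n / H⌋₊ : ℝ) * H / 2 ^ n)|)
      atTop (nhds |zygD g y H t|) :=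
    ((continuous_abs.comp hDcont).tendsto t).comp hseq
  exact le_of_tendsto hlim (Filter.Eventually.of_forall key)


private lemma zyg_chord' (g : ℝ → ℝ) (M : ℝ) (hM : 0 ≤ M) (hg : Continuous g)
    (hZ : ∀ x h : ℝ, 0 < h → |g (x + h) - 2 * g x + g (x - h)| ≤ 2 * M * h)
    (y H : ℝ) (hH : 0 < H) :
    ∀ t, 0 ≤ t → t ≤ H →
      |H * (g (y + t) - g y) - t * (g (y + H) - g y)| ≤ M * H ^ 2 := by
  have := zyg_chord g M hM hg hZ y H hH
  unfold zygD at this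
  exact this


private lemma zyg_double (g : ℝ → ℝ) (M : ℝ)
    (hZ : ∀ x h : ℝ, 0 < h → |g (x + h) - 2 * g x + g (x - h)| ≤ 2 * M * h)
    (y h : ℝ) (hh : 0 < h) :
    |(g (y + 2*h) - g y) - 2 * (g (y + h) - g y)| ≤ 2 * M * h := by
  have hz := hZ (y + h) h hh
  have e1 : y + h + h = y + 2*h := by ring
  have e2 : y + h - h = y := by ring
  rw [e1, e2] at hz
  have : (g (y + 2*h) - g y) - 2 * (g (y + h) - g y) = g (y + 2*h) - 2 * g (y+h) + g y := by
    ring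
  rw [this]
  exact hz

private lemma zyg_chain (g : ℝ → ℝ) (M : ℝ)
    (hZ : ∀ x h : ℝ, 0 < h → |g (x + h) - 2 * g x + g (x - h)| ≤ 2 * M * h)
    (y q : ℝ) (hq : 0 < q) :
    ∀ n : ℕ, |2^n * (g (y + q / 2^n) - g y) - (g (y + q) - g y)| ≤ n * (M * q) := by
  intro n
  induction n with
  | zero => simp
  | succ n ih =>
    have hh : (0:ℝ) < q / 2^(n+1) := by positivity
    have hd := zyg_double g M hZ y (q / 2^(n+1)) hh
    have e1 : 2 * (q / 2^(n+1)) = q / 2^n := by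
      field_simp
      ring
    rw [e1] at hd
    have hb : 2 * M * (q / 2^(n+1)) = M * q / 2^n := by
      field_simp
      ring
    rw [hb] at hd
    have key : 2^(n+1) * (g (y + q/2^(n+1)) - g y) - (g (y + q) - g y)
        = (2:ℝ)^n * (2 * (g (y + q/2^(n+1)) - g y) - (g (y + q/2^n) - g y))
          + (2^n * (g (y + q/2^n) - g y) - (g (y + q) - g y)) := by ring
    rw [key]
    have habs1 : |(2:ℝ)^n * (2 * (g (y + q/2^(n+1)) - g y) - (g (y + q/2^n) - g y))|
        ≤ M * q := by
      rw [abs_mul, abs_of_pos (by positivity : (0:ℝ) < 2^n), abs_sub_comm]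
      calc (2:ℝ)^n * |(g (y + q/2^n) - g y) - 2 * (g (y + q/2^(n+1)) - g y)|
          ≤ (2:ℝ)^n * (M * q / 2^n) := by
            exact mul_le_mul_of_nonneg_left hd (by positivity)
        _ = M * q := by field_simp
    calc |(2:ℝ)^n * (2 * (g (y + q/2^(n+1)) - g y) - (g (y + q/2^n) - g y))
          + (2^n * (g (y + q/2^n) - g y) - (g (y + q) - g y))|
        ≤ |(2:ℝ)^n * (2 * (g (y + q/2^(n+1)) - g y) - (g (y + q/2^n) - g y))|
          + |2^n * (g (y + q/2^n) - g y) - (g (y + q) - g y)| := abs_add_le _ _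
      _ ≤ M * q + n * (M * q) := add_le_add habs1 ih
      _ = (n+1 : ℕ) * (M * q) := by push_cast; ring

private lemma pow16 : ∀ n : ℕ, ((n:ℝ)+4)^2 ≤ 16 * 2^n := by
  intro n
  induction n with
  | zero => norm_num
  | succ n ih =>
    have hn : (0:ℝ) ≤ n := Nat.cast_nonneg n
    have h2 : (2:ℝ)^(n+1) = 2 * 2^n := by ring
    push_cast
    rw [h2]
    nlinarith [ih, hn]

private lemma zyg_key (g : ℝ → ℝ) (M : ℝ) (hM : 0 ≤ M) (hg : Continuous g)
    (hZ : ∀ x h : ℝ, 0 < h → |g (x + h) - 2 * g x + g (x - h)| ≤ 2 * M * h)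
    (x p q : ℝ) (hp : 0 < p) (hpq : p ≤ q) :
    (q * (g x - g (x - p)) - p * (g (x + q) - g x)) ^ 2 ≤ 32 * M^2 * p * q^3 := by
  have hq : 0 < q := lt_of_lt_of_le hp hpq
  classical
  have hex : ∃ n : ℕ, q ≤ p * 2 ^ n := by
    obtain ⟨n, hn⟩ := pow_unbounded_of_one_lt (q / p) (one_lt_two)
    refine ⟨n, ?_⟩
    rw [div_lt_iff₀ hp] at hn
    nlinarith
  obtain ⟨n, h1, h2⟩ : ∃ n : ℕ, q ≤ p * 2 ^ n ∧ p * 2 ^ n ≤ 2 * q := by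
    refine ⟨Nat.find hex, Nat.find_spec hex, ?_⟩
    rcases Nat.eq_zero_or_pos (Nat.find hex) with h0 | hpos
    · rw [h0]; norm_num; linarith
    · obtain ⟨m, hm⟩ := Nat.exists_eq_succ_of_ne_zero hpos.ne'
      have hmin : ¬ q ≤ p * 2 ^ m := Nat.find_min hex (by omega)
      push_neg at hmin
      rw [hm, pow_succ]
      push_cast at hmin ⊢
      nlinarith
  have h1' : q ≤ p * 2^n := h1
  have h2' : p * (2:ℝ)^n ≤ 2*q := by exact_mod_cast h2
  have h1'' : q ≤ p * (2:ℝ)^n := by exact_mod_cast h1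
  set h : ℝ := q / 2 ^ n with hh
  have hhpos : 0 < h := by positivity
  have hhq : (2:ℝ)^n * h = q := by rw [hh]; field_simp
  have hhp : h ≤ p := by
    rw [hh, div_le_iff₀ (by positivity : (0:ℝ) < 2^n)]
    linarith
  -- E1 : chain
  have E1 := zyg_chain g M hZ x q hq n
  rw [← hh] at E1
  -- E2 : left-right bridge
  have E2 := hZ x h hhpos
  -- E3 : chord on [x-p, x]
  have E3 := zyg_chord' g M hM hg hZ (x - p) p hp (p - h) (by linarith) (by linarith)
  have e1 : x - p + (p - h) = x - h := by ring
  have e2 : x - p + p = x := by ring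
  rw [e1, e2] at E3
  -- abbreviations
  set A : ℝ := g (x + h) - g x with hA
  set B : ℝ := g x - g (x - h) with hB
  set u : ℝ := g x - g (x - p) with hu
  set v : ℝ := g (x + q) - g x with hv
  -- E3 rephrased : |h*u - p*B| ≤ M*p^2
  have E3' : |h * u - p * B| ≤ M * p^2 := by
    have : h * u - p * B = p * (g (x - h) - g (x - p)) - (p - h) * u := by
      rw [hu, hB]; ring
    rw [this]
    exact E3
  have E2' : |A - B| ≤ 2 * M * h := by
    have : A - B = g (x + h) - 2 * g x + g (x - h) := by rw [hA, hB]; ring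
    rw [this]; exact E2
  have comb : q * u - p * v
      = (2:ℝ)^n * (h * u - p * B) + (2:ℝ)^n * p * (B - A) + p * ((2:ℝ)^n * A - v) := by
    rw [← hhq]; ring
  have hbound : |q * u - p * v| ≤ ((n:ℝ) + 4) * (M * (p * q)) := by
    rw [comb]
    have t0 : |(2:ℝ)^n * (h * u - p * B) + (2:ℝ)^n * p * (B - A) + p * ((2:ℝ)^n * A - v)|
        ≤ |(2:ℝ)^n * (h * u - p * B)| + |(2:ℝ)^n * p * (B - A)| + |p * ((2:ℝ)^n * A - v)| :=
      (abs_add_le _ _).trans (by gcongr; exact abs_add_le _ _)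
    have t1 : |(2:ℝ)^n * (h * u - p * B)| ≤ 2 * (M * (p * q)) := by
      rw [abs_mul, abs_of_pos (by positivity : (0:ℝ) < (2:ℝ)^n)]
      calc (2:ℝ)^n * |h * u - p * B| ≤ (2:ℝ)^n * (M * p^2) := by
            exact mul_le_mul_of_nonneg_left E3' (by positivity)
        _ = (p * 2^n) * (M * p) := by ring
        _ ≤ (2 * q) * (M * p) := by
            exact mul_le_mul_of_nonneg_right h2' (by positivity)
        _ = 2 * (M * (p * q)) := by ring
    have t2 : |(2:ℝ)^n * p * (B - A)| ≤ 2 * (M * (p * q)) := by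
      rw [abs_mul, abs_of_pos (by positivity : (0:ℝ) < (2:ℝ)^n * p), abs_sub_comm]
      calc (2:ℝ)^n * p * |A - B| ≤ (2:ℝ)^n * p * (2 * M * h) := by
            exact mul_le_mul_of_nonneg_left E2' (by positivity)
        _ = 2 * M * p * ((2:ℝ)^n * h) := by ring
        _ = 2 * (M * (p * q)) := by rw [hhq]; ring
    have t3 : |p * ((2:ℝ)^n * A - v)| ≤ (n:ℝ) * (M * (p * q)) := by
      rw [abs_mul, abs_of_pos hp]
      calc p * |(2:ℝ)^n * A - v| ≤ p * ((n:ℝ) * (M * q)) := by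
            exact mul_le_mul_of_nonneg_left E1 hp.le
        _ = (n:ℝ) * (M * (p * q)) := by ring
    linarith
  have hsq : (q * u - p * v)^2 ≤ ((n:ℝ)+4)^2 * (M * (p * q))^2 := by
    calc (q * u - p * v)^2 = |q * u - p * v|^2 := (sq_abs _).symm
      _ ≤ (((n:ℝ)+4) * (M * (p * q)))^2 := by
          apply pow_le_pow_left₀ (abs_nonneg _) hbound
      _ = ((n:ℝ)+4)^2 * (M * (p * q))^2 := by ring
  have h16 := pow16 n
  calc (q * u - p * v)^2 ≤ ((n:ℝ)+4)^2 * (M * (p * q))^2 := hsq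
    _ ≤ (16 * 2^n) * (M * (p * q))^2 := by
        exact mul_le_mul_of_nonneg_right h16 (by positivity)
    _ = 16 * (p * 2^n) * (M^2 * p * q^2) := by ring
    _ ≤ 16 * (2 * q) * (M^2 * p * q^2) := by
        exact mul_le_mul_of_nonneg_right (by linarith) (by positivity)
    _ = 32 * M^2 * p * q^3 := by ring


/-- For any `g` in the Zygmund class `Λ_*` with seminorm at most `M` there is a constant `C`
depending only on `M` such that for every triple `a < x < b`,
`(g(x)−g(a))²/(x−a) + (g(x)−g(b))²/(b−x) ≤ (g(b)−g(a))²/(b−a) + C(b−a)`. -/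
theorem zygmund_quadratic_inequality (M : ℝ) (hM : 0 < M) :
    ∃ C : ℝ, ∀ g : ℝ → ℝ, Continuous g →
      (∀ x h : ℝ, 0 < h → |g (x + h) - 2 * g x + g (x - h)| ≤ 2 * M * h) →
      ∀ a x b : ℝ, a < x → x < b →
        (g x - g a) ^ 2 / (x - a) + (g x - g b) ^ 2 / (b - x) ≤
          (g b - g a) ^ 2 / (b - a) + C * (b - a) := by
  refine ⟨32 * M^2, ?_⟩
  intro g hg hZ a x b hax hxb
  set p : ℝ := x - a with hp'
  set q : ℝ := b - x with hq'
  have hp : 0 < p := by rw [hp']; linarith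
  have hq : 0 < q := by rw [hq']; linarith
  have ha : x - p = a := by rw [hp']; ring
  have hb : x + q = b := by rw [hq']; ring
  have hba : b - a = p + q := by rw [hp', hq']; ring
  have hsq : (q * (g x - g a) - p * (g b - g x))^2 ≤ 32 * M^2 * (p * q) * (p + q)^2 := by
    rcases le_total p q with hpq | hqp
    · have key := zyg_key g M hM.le hg hZ x p q hp hpq
      rw [ha, hb] at key
      calc (q * (g x - g a) - p * (g b - g x))^2 ≤ 32 * M^2 * p * q^3 := key
        _ = 32 * M^2 * (p * q) * q^2 := by ring
        _ ≤ 32 * M^2 * (p * q) * (p + q)^2 := by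
            have : q^2 ≤ (p+q)^2 := by nlinarith
            exact mul_le_mul_of_nonneg_left this (by positivity)
    · -- reflect
      have hg' : Continuous (fun t : ℝ => g (-t)) := hg.comp continuous_neg
      have hZ' : ∀ y h : ℝ, 0 < h →
          |(fun t : ℝ => g (-t)) (y + h) - 2 * (fun t : ℝ => g (-t)) y
            + (fun t : ℝ => g (-t)) (y - h)| ≤ 2 * M * h := by
        intro y h hh
        simp only
        have hz := hZ (-y) h hh
        have e1 : -(y + h) = -y - h := by ring
        have e2 : -(y - h) = -y + h := by ring
        rw [e1, e2]
        rw [show g (-y - h) - 2 * g (-y) + g (-y + h)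
            = g (-y + h) - 2 * g (-y) + g (-y - h) from by ring]
        exact hz
      have key := zyg_key (fun t : ℝ => g (-t)) M hM.le hg' hZ' (-x) q p hq hqp
      have e1 : -(-x) = x := by ring
      have e2 : -(-x - q) = x + q := by ring
      have e3 : -(-x + p) = x - p := by ring
      rw [e1, e2, e3, ha, hb] at key
      -- key : (p * (g x - g b) - q * (g a - g x))^2 ≤ 32*M^2*q*p^3
      calc (q * (g x - g a) - p * (g b - g x))^2
          = (p * (g x - g b) - q * (g a - g x))^2 := by ring
        _ ≤ 32 * M^2 * q * p^3 := key
        _ = 32 * M^2 * (p * q) * p^2 := by ring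
        _ ≤ 32 * M^2 * (p * q) * (p + q)^2 := by
            have : p^2 ≤ (p+q)^2 := by nlinarith
            exact mul_le_mul_of_nonneg_left this (by positivity)
  rw [hba]
  have hppq : (0:ℝ) < p * q * (p + q) := by positivity
  have hid : (g x - g a)^2 / p + (g x - g b)^2 / q - (g b - g a)^2 / (p + q)
      = (q * (g x - g a) - p * (g b - g x))^2 / (p * q * (p + q)) := by
    field_simp
    ring
  have hdiv : (q * (g x - g a) - p * (g b - g x))^2 / (p * q * (p + q))
      ≤ 32 * M^2 * (p + q) := by
    rw [div_le_iff₀ hppq]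
    calc (q * (g x - g a) - p * (g b - g x))^2 ≤ 32 * M^2 * (p * q) * (p + q)^2 := hsq
      _ = 32 * M^2 * (p + q) * (p * q * (p + q)) := by ring
  linarith [hid, hdiv]
end

section
/- Let μ be a nonatomic positive Radon measure on ℝ and let g : ℝ → ℝ be a continuous function satisfying |g(x+h) − 2g(x) + g(x−h)| ≤ M μ([x−h, x+h]) for all x ∈ ℝ and h ≥ 0. Then for every triple a < x < b one has |g(x) − g(a)| + |g(x) − g(b)| ≤ |g(a) − g(b)| + 2M μ([a,b]). -/
open MeasureTheory Set

/-- If `g` satisfies the generalized Zygmund condition with constant `M` relative to a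
nonatomic Radon measure `μ`, then for every triple `a < x < b`,
`|g(x) − g(a)| + |g(x) − g(b)| ≤ |g(a) − g(b)| + 2M μ([a, b])`. -/
theorem genZygmund_triple_inequality
    (μ : Measure ℝ) [IsLocallyFiniteMeasure μ] (hna : ∀ x : ℝ, μ {x} = 0)
    (g : ℝ → ℝ) (hg : Continuous g) (M : ℝ) (hM : 0 < M)
    (hzyg : ∀ x h : ℝ, 0 ≤ h →
      |g (x + h) - 2 * g x + g (x - h)| ≤ M * (μ (Icc (x - h) (x + h))).toReal) :
    ∀ a x b : ℝ, a < x → x < b →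
      |g x - g a| + |g x - g b| ≤ |g a - g b| + 2 * M * (μ (Icc a b)).toReal := by
  intro a x b hax hxb
  have hab : a ≤ b := hax.le.trans hxb.le
  set B : ℝ := (μ (Icc a b)).toReal with hB
  have hBnn : 0 ≤ B := ENNReal.toReal_nonneg
  have hfin : μ (Icc a b) ≠ ⊤ := (isCompact_Icc.measure_lt_top).ne
  set F : ℝ → ℝ := fun y => |2 * g y - g a - g b| with hFdef
  have hF : Continuous F :=
    continuous_abs.comp (((continuous_const.mul hg).sub continuous_const).sub continuous_const)
  obtain ⟨x0, hx0mem, hx0max⟩ :=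
    isCompact_Icc.exists_isMaxOn (nonempty_Icc.mpr hab) hF.continuousOn
  have hS : ∀ y ∈ Icc a b, F y ≤ F x0 := fun y hy => hx0max hy
  have hMBnn : 0 ≤ 2 * M * B := by positivity
  have hkey : F x0 ≤ |g a - g b| + 2 * M * B := by
    rcases eq_or_lt_of_le hx0mem.1 with h1 | h1
    · have : 2 * g x0 - g a - g b = g a - g b := by rw [← h1]; ring
      simp only [hFdef, this]; linarith
    rcases eq_or_lt_of_le hx0mem.2 with h2 | h2
    · have : 2 * g x0 - g a - g b = g b - g a := by rw [h2]; ring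
      simp only [hFdef, this, abs_sub_comm (g b) (g a)]; linarith
    rcases le_total (x0 - a) (b - x0) with hc | hc
    · -- reflect about x0 to the right: x' = 2x0 - a
      have hz := hzyg x0 (x0 - a) (by linarith)
      have e1 : x0 + (x0 - a) = 2 * x0 - a := by ring
      have e2 : x0 - (x0 - a) = a := by ring
      rw [e1, e2] at hz
      have hmono : (μ (Icc a (2 * x0 - a))).toReal ≤ B :=
        ENNReal.toReal_mono hfin (measure_mono (Icc_subset_Icc le_rfl (by linarith)))
      have hz' : |g (2 * x0 - a) - 2 * g x0 + g a| ≤ M * B :=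
        hz.trans (mul_le_mul_of_nonneg_left hmono hM.le)
      have hFx' : F (2 * x0 - a) ≤ F x0 := hS _ ⟨by linarith, by linarith⟩
      have hX1 : 2 * g (2 * x0 - a) - g a - g b ≤ |2 * g x0 - g a - g b| :=
        (le_abs_self _).trans hFx'
      have hX2 : -|2 * g x0 - g a - g b| ≤ 2 * g (2 * x0 - a) - g a - g b :=
        le_trans (neg_le_neg hFx') (neg_abs_le _)
      have hid : (2 : ℝ) * (2 * g x0 - g a - g b) =
          -2 * (g (2 * x0 - a) - 2 * g x0 + g a) +
            (2 * g (2 * x0 - a) - g a - g b) + (g a - g b) := by ring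
      have hE := abs_le.mp hz'
      show |2 * g x0 - g a - g b| ≤ _
      rcases abs_cases (2 * g x0 - g a - g b) with ⟨he, _⟩ | ⟨he, _⟩ <;>
        rw [he] at hX1 hX2 ⊢ <;>
        linarith [le_abs_self (g a - g b), neg_abs_le (g a - g b), hE.1, hE.2]
    · -- reflect about x0 to the left: x' = 2x0 - b
      have hz := hzyg x0 (b - x0) (by linarith)
      have e1 : x0 + (b - x0) = b := by ring
      have e2 : x0 - (b - x0) = 2 * x0 - b := by ring
      rw [e1, e2] at hz
      have hmono : (μ (Icc (2 * x0 - b) b)).toReal ≤ B :=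
        ENNReal.toReal_mono hfin (measure_mono (Icc_subset_Icc (by linarith) le_rfl))
      have hz' : |g b - 2 * g x0 + g (2 * x0 - b)| ≤ M * B :=
        hz.trans (mul_le_mul_of_nonneg_left hmono hM.le)
      have hFx' : F (2 * x0 - b) ≤ F x0 := hS _ ⟨by linarith, by linarith⟩
      have hX1 : 2 * g (2 * x0 - b) - g a - g b ≤ |2 * g x0 - g a - g b| :=
        (le_abs_self _).trans hFx'
      have hX2 : -|2 * g x0 - g a - g b| ≤ 2 * g (2 * x0 - b) - g a - g b :=
        le_trans (neg_le_neg hFx') (neg_abs_le _)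
      have hid : (2 : ℝ) * (2 * g x0 - g a - g b) =
          -2 * (g b - 2 * g x0 + g (2 * x0 - b)) +
            (2 * g (2 * x0 - b) - g a - g b) + (g b - g a) := by ring
      have hE := abs_le.mp hz'
      have hG1 : g b - g a ≤ |g a - g b| := by
        rw [abs_sub_comm]; exact le_abs_self _
      have hG2 : -|g a - g b| ≤ g b - g a := by
        rw [abs_sub_comm]; exact neg_abs_le _
      show |2 * g x0 - g a - g b| ≤ _
      rcases abs_cases (2 * g x0 - g a - g b) with ⟨he, _⟩ | ⟨he, _⟩ <;>
        rw [he] at hX1 hX2 ⊢ <;> linarith [hE.1, hE.2]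
  have hx : |2 * g x - g a - g b| ≤ |g a - g b| + 2 * M * B :=
    le_trans (hS x ⟨hax.le, hxb.le⟩) hkey
  have hE := abs_le.mp hx
  have hG1 : g a - g b ≤ |g a - g b| := le_abs_self _
  have hG2 : -|g a - g b| ≤ g a - g b := neg_abs_le _
  rcases le_total (g x - g a) 0 with hp | hp <;> rcases le_total (g x - g b) 0 with hq | hq
  · rw [abs_of_nonpos hp, abs_of_nonpos hq]; linarith
  · rw [abs_of_nonpos hp, abs_of_nonneg hq]; linarith
  · rw [abs_of_nonneg hp, abs_of_nonpos hq]; linarith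
  · rw [abs_of_nonneg hp, abs_of_nonneg hq]; linarith
end

section
/- Fix γ ∈ (0,1). For n ≥ 1 define ρ_n : ℝ → ℝ by ρ_n(x) = 0 if ⌊4^n x⌋ ≡ 0 or 3 (mod 4), ρ_n(x) = 1 if ⌊4^n x⌋ ≡ 1 (mod 4), and ρ_n(x) = −1 if ⌊4^n x⌋ ≡ 2 (mod 4), and set v_n(x) = Π_{k=1}^n (1 + γ ρ_{2k−1}(x)). Then there exists a constant c > 0, depending only on γ, such that for every m ≥ 1, ∫_0^1 max_{1 ≤ n ≤ m} v_n(x) dx ≥ c m. -/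
open Set

open MeasureTheory intervalIntegral

/-- The Rademacher-type function `ρ_n`: on the 4-adic interval `[j 4⁻ⁿ, (j+1) 4⁻ⁿ)` it equals
`0, 1, −1, 0` according to `j ≡ 0, 1, 2, 3 (mod 4)`. -/
noncomputable def rho (n : ℕ) (x : ℝ) : ℝ :=
  if ⌊(4 : ℝ) ^ n * x⌋ % 4 = 1 then 1
  else if ⌊(4 : ℝ) ^ n * x⌋ % 4 = 2 then -1
  else 0

/-- The weight `v_n(x) = Π_{k=1}^n (1 + γ ρ_{2k−1}(x))`. -/
noncomputable def vweight (γ : ℝ) (n : ℕ) (x : ℝ) : ℝ :=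
  ∏ k ∈ Finset.Icc 1 n, (1 + γ * rho (2 * k - 1) x)

lemma rho_cases (n : ℕ) (x : ℝ) : rho n x = 0 ∨ rho n x = 1 ∨ rho n x = -1 := by
  unfold rho; split_ifs <;> tauto

lemma measurable_rho (n : ℕ) : Measurable (rho n) := by
  have h : Measurable fun x : ℝ => ⌊(4:ℝ)^n * x⌋ :=
    Int.measurable_floor.comp (measurable_const.mul measurable_id)
  have : rho n = (fun z : ℤ => if z % 4 = 1 then (1:ℝ) else if z % 4 = 2 then -1 else 0) ∘
      (fun x : ℝ => ⌊(4:ℝ)^n * x⌋) := rfl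
  rw [this]
  exact Measurable.comp (.of_discrete) h

section
variable {γ : ℝ}

lemma factor_pos (hγ0 : 0 < γ) (hγ1 : γ < 1) (n : ℕ) (x : ℝ) : 0 < 1 + γ * rho n x := by
  rcases rho_cases n x with h | h | h <;> rw [h] <;> nlinarith

lemma factor_le (hγ0 : 0 < γ) (n : ℕ) (x : ℝ) : 1 + γ * rho n x ≤ 1 + γ := by
  rcases rho_cases n x with h | h | h <;> rw [h] <;> nlinarith

lemma vweight_pos (hγ0 : 0 < γ) (hγ1 : γ < 1) (n : ℕ) (x : ℝ) : 0 < vweight γ n x :=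
  Finset.prod_pos fun k _ => factor_pos hγ0 hγ1 _ _

lemma vweight_le (hγ0 : 0 < γ) (hγ1 : γ < 1) (n : ℕ) (x : ℝ) : vweight γ n x ≤ (1 + γ) ^ n := by
  calc vweight γ n x ≤ ∏ k ∈ Finset.Icc 1 n, (1 + γ) := by
        apply Finset.prod_le_prod (fun k _ => (factor_pos hγ0 hγ1 _ _).le)
          (fun k _ => factor_le hγ0 _ _)
    _ = (1 + γ) ^ n := by rw [Finset.prod_const, Nat.card_Icc]; norm_num
  
lemma measurable_vweight (n : ℕ) : Measurable (vweight γ n) := by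
  unfold vweight
  exact Finset.measurable_prod _ fun k _ =>
    measurable_const.add (measurable_const.mul (measurable_rho _))

/-- running max including `n = 0` (where `vweight γ 0 x = 1`). -/
noncomputable def Gmax (γ : ℝ) (m : ℕ) (x : ℝ) : ℝ :=
  (Finset.range (m + 1)).sup' Finset.nonempty_range_add_one (fun n => vweight γ n x)

lemma vweight_zero (x : ℝ) : vweight γ 0 x = 1 := by simp [vweight]

lemma one_le_Gmax (m : ℕ) (x : ℝ) : 1 ≤ Gmax γ m x := by
  have := Finset.le_sup' (fun n => vweight γ n x)
    (Finset.mem_range.mpr (Nat.succ_pos m))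
  rwa [vweight_zero] at this

lemma Gmax_le (hγ0 : 0 < γ) (hγ1 : γ < 1) (m : ℕ) (x : ℝ) : Gmax γ m x ≤ (1 + γ) ^ m := by
  apply Finset.sup'_le
  intro n hn
  calc vweight γ n x ≤ (1+γ)^n := vweight_le hγ0 hγ1 _ _
    _ ≤ (1+γ)^m := by
        apply pow_le_pow_right₀ (by linarith) (Nat.lt_succ_iff.mp (Finset.mem_range.mp hn))

lemma measurable_Gmax (m : ℕ) : Measurable (Gmax γ m) := by
  have : Gmax γ m = (Finset.range (m+1)).sup' Finset.nonempty_range_add_one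
      (fun n => vweight γ n) := by
    funext x
    exact (Finset.sup'_apply _ _ _).symm
  rw [this]
  exact Finset.measurable_sup' _ fun n _ => measurable_vweight n

end

lemma floor_scale (k : ℕ) (s : ℕ) (x : ℝ) :
    ⌊(4:ℝ)^(k+2) * ((x + s)/16)⌋ = ⌊(4:ℝ)^k * x⌋ + 4^k * s := by
  have h : (4:ℝ)^(k+2) * ((x + s)/16) = 4^k * x + ((4^k * s : ℤ) : ℝ) := by
    push_cast; ring
  rw [h, Int.floor_add_intCast]

lemma rho_scale (k : ℕ) (hk : 1 ≤ k) (s : ℕ) (x : ℝ) :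
    rho (k+2) ((x + s)/16) = rho k x := by
  obtain ⟨j, rfl⟩ := Nat.exists_eq_add_of_le hk
  unfold rho
  rw [floor_scale]
  have h : (⌊(4:ℝ)^(1+j) * x⌋ + 4^(1+j) * s) % 4 = ⌊(4:ℝ)^(1+j) * x⌋ % 4 := by
    have : (4:ℤ)^(1+j) * s = 4 * (4^j * s) := by ring
    rw [this, Int.add_mul_emod_self_left]
  rw [h]

lemma floor_one_scale (s : ℕ) (hs : s < 16) {x : ℝ} (hx : x ∈ Ico (0:ℝ) 1) :
    ⌊(4:ℝ)^1 * ((x + s)/16)⌋ = (s / 4 : ℕ) := by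
  have h : (4:ℝ)^1 * ((x + s)/16) = (x + s)/4 := by ring
  rw [h]
  have h1 : 4 * (s/4) ≤ s := by omega
  have h2 : s ≤ 4 * (s/4) + 3 := by omega
  have r1 : 4 * ((s/4 : ℕ) : ℝ) ≤ (s:ℝ) := by exact_mod_cast h1
  have r2 : (s:ℝ) ≤ 4 * ((s/4 : ℕ) : ℝ) + 3 := by exact_mod_cast h2
  have hx0 := hx.1
  have hx1 := hx.2
  rw [Int.floor_eq_iff, Int.cast_natCast]
  constructor
  · rw [le_div_iff₀ (by norm_num)]; linarith
  · rw [div_lt_iff₀ (by norm_num)]; linarith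

noncomputable def gfac (γ : ℝ) (s : ℕ) : ℝ :=
  if s / 4 = 1 then 1 + γ else if s / 4 = 2 then 1 - γ else 1

lemma rho_one_scale (γ : ℝ) (s : ℕ) (hs : s < 16) {x : ℝ} (hx : x ∈ Ico (0:ℝ) 1) :
    1 + γ * rho 1 ((x + s)/16) = gfac γ s := by
  unfold rho gfac
  rw [floor_one_scale s hs hx]
  have h4 : s / 4 < 4 := by omega
  interval_cases h : s / 4 <;> norm_num <;> ring

lemma vweight_succ (γ : ℝ) (n : ℕ) (x : ℝ) :
    vweight γ (n+1) x = vweight γ n x * (1 + γ * rho (2*(n+1)-1) x) := by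
  unfold vweight
  rw [← Finset.Ico_add_one_right_eq_Icc, Finset.prod_Ico_succ_top (by omega), Finset.Ico_add_one_right_eq_Icc]

lemma vweight_zero' (γ : ℝ) (x : ℝ) : vweight γ 0 x = 1 := by simp [vweight]

lemma vweight_scale (γ : ℝ) (s : ℕ) (hs : s < 16) {x : ℝ} (hx : x ∈ Ico (0:ℝ) 1)
    (n : ℕ) : vweight γ (n+1) ((x + s)/16) = gfac γ s * vweight γ n x := by
  induction n with
  | zero =>
    rw [vweight_succ, vweight_zero', vweight_zero', one_mul, mul_one]
    exact rho_one_scale γ s hs hx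
  | succ n ih =>
    rw [vweight_succ, ih, vweight_succ]
    have h1 : 2*(n+1+1)-1 = (2*(n+1)-1) + 2 := by omega
    rw [h1, rho_scale (2*(n+1)-1) (by omega) s x]
    ring

lemma gfac_pos {γ : ℝ} (hγ0 : 0 < γ) (hγ1 : γ < 1) (s : ℕ) : 0 < gfac γ s := by
  unfold gfac; split_ifs <;> nlinarith

lemma Gmax_scale {γ : ℝ} (hγ0 : 0 < γ) (hγ1 : γ < 1) (s : ℕ) (hs : s < 16)
    {x : ℝ} (hx : x ∈ Ico (0:ℝ) 1) (m : ℕ) :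
    Gmax γ (m+1) ((x + s)/16) = max 1 (gfac γ s * Gmax γ m x) := by
  unfold Gmax
  apply le_antisymm
  · apply Finset.sup'_le
    intro n hn
    match n with
    | 0 => rw [vweight_zero']; exact le_max_left _ _
    | (j+1) =>
      rw [vweight_scale γ s hs hx j]
      refine le_trans ?_ (le_max_right _ _)
      apply mul_le_mul_of_nonneg_left ?_ (gfac_pos hγ0 hγ1 s).le
      have hjm : j ∈ Finset.range (m+1) := by
        have := Finset.mem_range.mp hn; exact Finset.mem_range.mpr (by omega)
      exact Finset.le_sup' (fun n => vweight γ n x) hjm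
  · apply max_le
    · have h0 : (0:ℕ) ∈ Finset.range (m+1+1) := Finset.mem_range.mpr (by omega)
      have := Finset.le_sup' (fun n => vweight γ n ((x + s)/16)) h0
      rwa [vweight_zero'] at this
    · obtain ⟨j, hj, hje⟩ := Finset.exists_mem_eq_sup'
        (Finset.nonempty_range_add_one (n := m)) (fun n => vweight γ n x)
      have hj1 : j + 1 ∈ Finset.range (m+1+1) := by
        have := Finset.mem_range.mp hj; exact Finset.mem_range.mpr (by omega)
      rw [hje, ← vweight_scale γ s hs hx j]
      exact Finset.le_sup' (fun n => vweight γ n ((x + s)/16)) hj1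

lemma II {F : ℝ → ℝ} (hFm : Measurable F) {C : ℝ} (hC : ∀ x, |F x| ≤ C) (a b : ℝ) :
    IntervalIntegrable F MeasureTheory.volume a b := by
  apply IntervalIntegrable.mono_fun' (g := fun _ => C) intervalIntegrable_const
    hFm.aestronglyMeasurable.restrict
  exact MeasureTheory.ae_of_all _ hC

lemma scale16 {F : ℝ → ℝ} (hFm : Measurable F) {C : ℝ} (hC : ∀ x, |F x| ≤ C) :
    (16:ℝ) * ∫ x in (0:ℝ)..1, F x
      = ∑ s ∈ Finset.range 16, ∫ x in (0:ℝ)..1, F ((x + s)/16) := by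
  have key : ∀ s : ℕ, (∫ x in (0:ℝ)..1, F ((x + s)/16))
      = 16 * ∫ x in ((s:ℝ)/16)..((s:ℝ)+1)/16, F x := by
    intro s
    have h1 := intervalIntegral.integral_comp_add_right (a := (0:ℝ)) (b := 1)
      (fun y => F (y/16)) (s:ℝ)
    norm_num at h1
    rw [show (1+(s:ℝ))/16 = ((s:ℝ)+1)/16 by ring] at h1
    exact h1
  rw [Finset.sum_congr rfl (fun s _ => key s), ← Finset.mul_sum]
  congr 1
  have := intervalIntegral.sum_integral_adjacent_intervals
    (f := F) (μ := MeasureTheory.volume) (a := fun k : ℕ => (k:ℝ)/16) (n := 16)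
    (fun k _ => II hFm hC _ _)
  norm_num at this
  rw [← this]


lemma ae_Ico (u v : ℝ → ℝ) (h : ∀ x ∈ Ico (0:ℝ) 1, u x = v x) :
    ∫ x in (0:ℝ)..1, u x = ∫ x in (0:ℝ)..1, v x := by
  apply intervalIntegral.integral_congr_ae
  have h0 : ∀ᵐ (x:ℝ), x ∉ ({1} : Set ℝ) :=
    (Set.countable_singleton (1:ℝ)).ae_notMem _
  filter_upwards [h0] with x hx1 hx2
  rw [Set.uIoc_of_le (by norm_num : (0:ℝ) ≤ 1)] at hx2
  exact h x ⟨hx2.1.le, lt_of_le_of_ne hx2.2 (by simpa using hx1)⟩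

lemma gfac_le {γ : ℝ} (hγ0 : 0 < γ) (s : ℕ) : gfac γ s ≤ 1 + γ := by
  unfold gfac; split_ifs <;> nlinarith

lemma Gmax_abs_le {γ : ℝ} (hγ0 : 0 < γ) (hγ1 : γ < 1) (m : ℕ) (x : ℝ) :
    |Gmax γ m x| ≤ (1+γ)^m := by
  rw [abs_of_nonneg (le_trans zero_le_one (one_le_Gmax m x))]
  exact Gmax_le hγ0 hγ1 m x

noncomputable def Jint (γ : ℝ) (m : ℕ) : ℝ := ∫ x in (0:ℝ)..1, Gmax γ m x

noncomputable def Rint (γ : ℝ) (m : ℕ) : ℝ :=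
  ∫ x in (0:ℝ)..1, max 0 (1 - (1-γ) * Gmax γ m x)

noncomputable def Qint (γ : ℝ) (m : ℕ) (A : ℝ) : ℝ :=
  ∫ x in (0:ℝ)..1, (if Gmax γ m x ≤ A then (1:ℝ) else 0)

lemma Jrec {γ : ℝ} (hγ0 : 0 < γ) (hγ1 : γ < 1) (m : ℕ) :
    Jint γ (m+1) = Jint γ m + (1/4) * Rint γ m := by
  have hmeas : ∀ j, Measurable (Gmax γ j) := fun j => measurable_Gmax j
  have habs : ∀ x, |Gmax γ (m+1) x| ≤ (1+γ)^(m+1) := Gmax_abs_le hγ0 hγ1 (m+1)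
  have h16 := scale16 (hmeas (m+1)) habs
  -- rewrite each piece
  have hpiece : ∀ s ∈ Finset.range 16,
      (∫ x in (0:ℝ)..1, Gmax γ (m+1) ((x + s)/16))
        = ∫ x in (0:ℝ)..1, max 1 (gfac γ s * Gmax γ m x) := by
    intro s hs
    exact ae_Ico _ _ (fun x hx => Gmax_scale hγ0 hγ1 s (Finset.mem_range.mp hs) hx m)
  rw [Finset.sum_congr rfl hpiece] at h16
  -- integrability of building blocks
  have hIG : ∀ (c : ℝ), IntervalIntegrable (fun x => c * Gmax γ m x)
      MeasureTheory.volume 0 1 := by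
    intro c
    apply II (measurable_const.mul (hmeas m)) (C := |c| * (1+γ)^m)
    intro x
    show |c * Gmax γ m x| ≤ |c| * (1+γ)^m
    rw [abs_mul]
    exact mul_le_mul_of_nonneg_left (Gmax_abs_le hγ0 hγ1 m x) (abs_nonneg c)
  have hIR : IntervalIntegrable (fun x => max 0 (1 - (1-γ) * Gmax γ m x))
      MeasureTheory.volume 0 1 := by
    apply II (measurable_const.max (measurable_const.sub
      (measurable_const.mul (hmeas m)))) (C := 1)
    intro x
    have h1 : (0:ℝ) ≤ max 0 (1 - (1-γ) * Gmax γ m x) := le_max_left _ _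
    have h2 : (1-γ) * Gmax γ m x ≥ 0 :=
      mul_nonneg (by linarith) (by linarith [one_le_Gmax (γ := γ) m x])
    show |max 0 (1 - (1-γ) * Gmax γ m x)| ≤ 1
    rw [abs_of_nonneg h1]
    apply max_le (by norm_num) (by linarith)
  -- pointwise evaluations
  have hA : (∫ x in (0:ℝ)..1, max 1 (Gmax γ m x)) = Jint γ m := by
    apply ae_Ico
    intro x _
    rw [max_eq_right (one_le_Gmax m x)]
  have hB : (∫ x in (0:ℝ)..1, max 1 ((1+γ) * Gmax γ m x)) = (1+γ) * Jint γ m := by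
    rw [Jint, ← intervalIntegral.integral_const_mul]
    apply ae_Ico
    intro x _
    have hg := one_le_Gmax (γ := γ) m x
    rw [max_eq_right]
    nlinarith
  have hC : (∫ x in (0:ℝ)..1, max 1 ((1-γ) * Gmax γ m x))
      = (1-γ) * Jint γ m + Rint γ m := by
    have hpt : ∀ x, max 1 ((1-γ) * Gmax γ m x)
        = (1-γ) * Gmax γ m x + max 0 (1 - (1-γ) * Gmax γ m x) := by
      intro x
      rcases le_total ((1-γ) * Gmax γ m x) 1 with h | h
      · rw [max_eq_left h, max_eq_right (by linarith)]; ring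
      · rw [max_eq_right h, max_eq_left (by linarith)]; ring
    rw [intervalIntegral.integral_congr (fun x _ => hpt x),
      intervalIntegral.integral_add (hIG (1-γ)) hIR,
      Jint, Rint, intervalIntegral.integral_const_mul]
  -- evaluate the 16 gfac values and collect
  rw [show (16:ℕ) = 15 + 1 by rfl] at h16
  simp only [Finset.sum_range_succ, Finset.sum_range_zero] at h16
  norm_num [gfac] at h16
  rw [hA, hB, hC] at h16
  have hJ : Jint γ (m+1) = ∫ x in (0:ℝ)..1, Gmax γ (m+1) x := rfl
  have h17 : (16:ℝ) * Jint γ (m+1)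
      = 8 * Jint γ m + 4 * ((1+γ) * Jint γ m) + 4 * ((1-γ) * Jint γ m + Rint γ m) := by
    rw [hJ, h16]; ring
  linarith

lemma measurable_Qind {γ : ℝ} (m : ℕ) (A : ℝ) :
    Measurable (fun x => if Gmax γ m x ≤ A then (1:ℝ) else 0) :=
  Measurable.ite (measurableSet_le (measurable_Gmax m) measurable_const)
    measurable_const measurable_const

lemma Qind_abs (γ : ℝ) (m : ℕ) (A : ℝ) (x : ℝ) :
    |if Gmax γ m x ≤ A then (1:ℝ) else 0| ≤ 1 := by
  split_ifs <;> norm_num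

lemma Qrec {γ : ℝ} (hγ0 : 0 < γ) (hγ1 : γ < 1) (m : ℕ) {A : ℝ} (hA : 1 ≤ A) :
    Qint γ (m+1) A = (1/2) * Qint γ m A + (1/4) * Qint γ m (A/(1+γ))
      + (1/4) * Qint γ m (A/(1-γ)) := by
  have h16 := scale16 (measurable_Qind (γ := γ) (m+1) A) (Qind_abs γ (m+1) A)
  have hpiece : ∀ s ∈ Finset.range 16,
      (∫ x in (0:ℝ)..1, (if Gmax γ (m+1) ((x + s)/16) ≤ A then (1:ℝ) else 0))
        = Qint γ m (A / gfac γ s) := by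
    intro s hs
    apply ae_Ico
    intro x hx
    rw [Gmax_scale hγ0 hγ1 s (Finset.mem_range.mp hs) hx m]
    have hiff : (max 1 (gfac γ s * Gmax γ m x) ≤ A) = (Gmax γ m x ≤ A / gfac γ s) := by
      rw [eq_iff_iff, max_le_iff, and_iff_right hA,
        le_div_iff₀ (gfac_pos hγ0 hγ1 s), mul_comm]
    simp only [hiff]
  rw [Finset.sum_congr rfl hpiece] at h16
  rw [show (16:ℕ) = 15 + 1 by rfl] at h16
  simp only [Finset.sum_range_succ, Finset.sum_range_zero] at h16
  norm_num [gfac] at h16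
  have hQ : Qint γ (m+1) A
      = ∫ x in (0:ℝ)..1, (if Gmax γ (m+1) x ≤ A then (1:ℝ) else 0) := rfl
  rw [← hQ] at h16
  linarith

lemma Qint_nonneg {γ : ℝ} (m : ℕ) (A : ℝ) : 0 ≤ Qint γ m A := by
  apply intervalIntegral.integral_nonneg (by norm_num)
  intro x _
  split_ifs <;> norm_num

lemma Gmax_zero (γ : ℝ) (x : ℝ) : Gmax γ 0 x = 1 := by
  simp [Gmax, vweight_zero']

lemma Qint_zero (γ : ℝ) (A : ℝ) : Qint γ 0 A = if 1 ≤ A then 1 else 0 := by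
  have : Qint γ 0 A = ∫ x in (0:ℝ)..1, (if 1 ≤ A then (1:ℝ) else 0) := by
    apply ae_Ico
    intro x _
    rw [Gmax_zero]
  rw [this]
  split_ifs <;> simp

lemma sqrt_sum_le {γ : ℝ} (hγ0 : 0 < γ) (hγ1 : γ < 1) :
    Real.sqrt (1+γ) + Real.sqrt (1-γ) ≤ 2 := by
  have h1 : Real.sqrt (1+γ) ^ 2 = 1+γ := Real.sq_sqrt (by linarith)
  have h2 : Real.sqrt (1-γ) ^ 2 = 1-γ := Real.sq_sqrt (by linarith)
  have h3 : 0 ≤ Real.sqrt (1+γ) := Real.sqrt_nonneg _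
  have h4 : 0 ≤ Real.sqrt (1-γ) := Real.sqrt_nonneg _
  nlinarith [sq_nonneg (Real.sqrt (1+γ) - Real.sqrt (1-γ)),
    sq_nonneg (Real.sqrt (1+γ) + Real.sqrt (1-γ) - 2)]

lemma one_le_sqrt_arg {γ A : ℝ} (hγ0 : 0 < γ) (hA0 : 0 < A) (hA1 : A < 1) :
    1 ≤ Real.sqrt ((1+γ)/A) := by
  nth_rewrite 1 [← Real.sqrt_one]
  apply Real.sqrt_le_sqrt
  rw [le_div_iff₀ hA0]
  linarith

lemma Qbound {γ : ℝ} (hγ0 : 0 < γ) (hγ1 : γ < 1) :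
    ∀ m : ℕ, ∀ A : ℝ, 0 < A → 1 - Real.sqrt ((1+γ)/A) ≤ Qint γ m A := by
  intro m
  induction m with
  | zero =>
    intro A hA0
    rw [Qint_zero]
    split_ifs with h
    · have : 0 ≤ Real.sqrt ((1+γ)/A) := Real.sqrt_nonneg _
      linarith
    · have := one_le_sqrt_arg hγ0 hA0 (by linarith [not_le.mp h])
      linarith
  | succ m ih =>
    intro A hA0
    rcases le_or_gt 1 A with hA | hA
    · rw [Qrec hγ0 hγ1 m hA]
      have i1 := ih A hA0
      have i2 := ih (A/(1+γ)) (by positivity)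
      have i3 := ih (A/(1-γ)) (div_pos hA0 (by linarith : (0:ℝ) < 1-γ))
      have e2 : (1+γ)/(A/(1+γ)) = ((1+γ)/A) * (1+γ) := by
        rw [div_div_eq_mul_div, div_mul_eq_mul_div]
      have e3 : (1+γ)/(A/(1-γ)) = ((1+γ)/A) * (1-γ) := by
        rw [div_div_eq_mul_div, div_mul_eq_mul_div]
      rw [e2] at i2
      rw [e3] at i3
      rw [Real.sqrt_mul (by positivity)] at i2 i3
      set t := Real.sqrt ((1+γ)/A) with ht
      have htn : 0 ≤ t := Real.sqrt_nonneg _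
      have hsum := sqrt_sum_le hγ0 hγ1
      have key : 0 ≤ t * (2 - (Real.sqrt (1+γ) + Real.sqrt (1-γ))) :=
        mul_nonneg htn (by linarith)
      nlinarith
    · have := one_le_sqrt_arg hγ0 hA0 hA
      have := Qint_nonneg (γ := γ) (m+1) A
      linarith

lemma Rbound {γ : ℝ} (hγ0 : 0 < γ) (hγ1 : γ < 1) (m : ℕ) :
    (γ^2/2) * Qint γ m ((1-γ^2/2)/(1-γ)) ≤ Rint γ m := by
  set A : ℝ := (1-γ^2/2)/(1-γ) with hA
  have hIR : IntervalIntegrable (fun x => max 0 (1 - (1-γ) * Gmax γ m x))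
      MeasureTheory.volume 0 1 := by
    apply II (measurable_const.max (measurable_const.sub
      (measurable_const.mul (measurable_Gmax m)))) (C := 1)
    intro x
    have h1 : (0:ℝ) ≤ max 0 (1 - (1-γ) * Gmax γ m x) := le_max_left _ _
    have h2 : (1-γ) * Gmax γ m x ≥ 0 :=
      mul_nonneg (by linarith) (by linarith [one_le_Gmax (γ := γ) m x])
    show |max 0 (1 - (1-γ) * Gmax γ m x)| ≤ 1
    rw [abs_of_nonneg h1]
    apply max_le (by norm_num) (by linarith)
  have hIQ : IntervalIntegrable (fun x => (γ^2/2) * (if Gmax γ m x ≤ A then (1:ℝ) else 0))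
      MeasureTheory.volume 0 1 := by
    apply II (measurable_const.mul (measurable_Qind m A)) (C := γ^2/2)
    intro x
    show |(γ^2/2) * (if Gmax γ m x ≤ A then (1:ℝ) else 0)| ≤ γ^2/2
    rw [abs_mul, abs_of_nonneg (by positivity : (0:ℝ) ≤ γ^2/2)]
    have := Qind_abs γ m A x
    nlinarith [abs_nonneg (if Gmax γ m x ≤ A then (1:ℝ) else 0), sq_nonneg γ]
  have hpt : ∀ x ∈ Icc (0:ℝ) 1,
      (γ^2/2) * (if Gmax γ m x ≤ A then (1:ℝ) else 0)
        ≤ max 0 (1 - (1-γ) * Gmax γ m x) := by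
    intro x _
    split_ifs with h
    · have hkey : 1 - (1-γ) * Gmax γ m x ≥ γ^2/2 := by
        have h2 : (1-γ) * Gmax γ m x ≤ (1-γ) * A :=
          mul_le_mul_of_nonneg_left h (by linarith)
        have h3 : (1-γ) * A = 1 - γ^2/2 := by
          rw [hA, mul_div_assoc']
          rw [mul_comm, mul_div_assoc, div_self (by linarith : (1:ℝ)-γ ≠ 0), mul_one]
        nlinarith
      calc (γ^2/2) * 1 = γ^2/2 := mul_one _
        _ ≤ 1 - (1-γ) * Gmax γ m x := hkey
        _ ≤ max 0 (1 - (1-γ) * Gmax γ m x) := le_max_right _ _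
    · rw [mul_zero]
      exact le_max_left _ _
  have := intervalIntegral.integral_mono_on (by norm_num : (0:ℝ) ≤ 1) hIQ hIR hpt
  rwa [intervalIntegral.integral_const_mul] at this

lemma Jint_zero (γ : ℝ) : Jint γ 0 = 1 := by
  have : Jint γ 0 = ∫ x in (0:ℝ)..1, (1:ℝ) := ae_Ico _ _ (fun x _ => Gmax_zero γ x)
  rw [this]
  simp

lemma Jlower {γ : ℝ} (hγ0 : 0 < γ) (hγ1 : γ < 1) (m : ℕ) :
    1 + m * ((γ^2/2) * (1 - Real.sqrt ((1+γ)/((1-γ^2/2)/(1-γ)))) / 4) ≤ Jint γ m := by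
  set A : ℝ := (1-γ^2/2)/(1-γ) with hA
  have hApos : 0 < A := div_pos (by nlinarith) (by linarith)
  set δ : ℝ := 1 - Real.sqrt ((1+γ)/A) with hδ
  induction m with
  | zero => simp [Jint_zero]
  | succ m ih =>
    have hQ : δ ≤ Qint γ m A := Qbound hγ0 hγ1 m A hApos
    have hR := Rbound hγ0 hγ1 m
    have hrec := Jrec hγ0 hγ1 m
    have hQδ : (γ^2/2) * δ ≤ (γ^2/2) * Qint γ m A :=
      mul_le_mul_of_nonneg_left hQ (by positivity)
    push_cast
    nlinarith


/-- For `γ ∈ (0,1)` there is `c > 0` (depending only on `γ`) such that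
`∫_0^1 max_{1 ≤ n ≤ m} v_n(x) dx ≥ c m` for every `m ≥ 1`. -/
theorem integral_max_weight_lower_bound :
    ∀ γ : ℝ, 0 < γ → γ < 1 → ∃ c > 0, ∀ m : ℕ, ∀ hm : 1 ≤ m,
      c * m ≤ ∫ x in (0:ℝ)..1,
        (Finset.Icc 1 m).sup' (Finset.nonempty_Icc.mpr hm) (fun n => vweight γ n x) := by
  intro γ hγ0 hγ1
  have hApos : (0:ℝ) < (1-γ^2/2)/(1-γ) := div_pos (by nlinarith) (by linarith)
  have hδpos : 0 < 1 - Real.sqrt ((1+γ)/((1-γ^2/2)/(1-γ))) := by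
    have harg : (1+γ)/((1-γ^2/2)/(1-γ)) < 1 := by
      rw [div_div_eq_mul_div, div_lt_one (by nlinarith)]
      nlinarith
    have h0 : (0:ℝ) ≤ (1+γ)/((1-γ^2/2)/(1-γ)) := by positivity
    have := Real.sqrt_lt_sqrt h0 harg
    rw [Real.sqrt_one] at this
    linarith
  refine ⟨(γ^2/2) * (1 - Real.sqrt ((1+γ)/((1-γ^2/2)/(1-γ)))) / 4, by positivity, ?_⟩
  intro m hm
  set c : ℝ := (γ^2/2) * (1 - Real.sqrt ((1+γ)/((1-γ^2/2)/(1-γ)))) / 4 with hc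
  set F : ℝ → ℝ := fun x =>
    (Finset.Icc 1 m).sup' (Finset.nonempty_Icc.mpr hm) (fun n => vweight γ n x) with hF
  have hFmeas : Measurable F := by
    have : F = (Finset.Icc 1 m).sup' (Finset.nonempty_Icc.mpr hm)
        (fun n => vweight γ n) := by
      funext x
      exact (Finset.sup'_apply _ _ _).symm
    rw [this]
    exact Finset.measurable_sup' _ fun n _ => measurable_vweight n
  have hFpos : ∀ x, 0 ≤ F x := by
    intro x
    have h1 : (1:ℕ) ∈ Finset.Icc 1 m := Finset.mem_Icc.mpr ⟨le_refl _, hm⟩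
    exact le_trans (vweight_pos hγ0 hγ1 1 x).le (Finset.le_sup' (fun n => vweight γ n x) h1)
  have hFle : ∀ x, |F x| ≤ (1+γ)^m := by
    intro x
    rw [abs_of_nonneg (hFpos x)]
    apply Finset.sup'_le
    intro n hn
    calc vweight γ n x ≤ (1+γ)^n := vweight_le hγ0 hγ1 n x
      _ ≤ (1+γ)^m := pow_le_pow_right₀ (by linarith) (Finset.mem_Icc.mp hn).2
  have hGint : IntervalIntegrable (fun x => Gmax γ m x - 1) MeasureTheory.volume 0 1 := by
    apply II ((measurable_Gmax m).sub measurable_const) (C := (1+γ)^m)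
    intro x
    have h1 := one_le_Gmax (γ := γ) m x
    have h2 := Gmax_le hγ0 hγ1 m x
    show |Gmax γ m x - 1| ≤ (1+γ)^m
    rw [abs_of_nonneg (by linarith)]
    linarith
  have hpt : ∀ x ∈ Icc (0:ℝ) 1, Gmax γ m x - 1 ≤ F x := by
    intro x _
    have : Gmax γ m x ≤ F x + 1 := by
      apply Finset.sup'_le
      intro n hn
      match n with
      | 0 => rw [vweight_zero']; linarith [hFpos x]
      | (j+1) =>
        have hj : j + 1 ∈ Finset.Icc 1 m := by
          have := Finset.mem_range.mp hn
          exact Finset.mem_Icc.mpr ⟨by omega, by omega⟩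
        have := Finset.le_sup' (fun n => vweight γ n x) hj
        linarith
    linarith
  have hmono := intervalIntegral.integral_mono_on (by norm_num : (0:ℝ) ≤ 1)
    hGint (II hFmeas hFle 0 1) hpt
  have hsub : (∫ x in (0:ℝ)..1, (Gmax γ m x - 1)) = Jint γ m - 1 := by
    rw [intervalIntegral.integral_sub (II (measurable_Gmax m)
      (Gmax_abs_le hγ0 hγ1 m) 0 1) intervalIntegrable_const]
    simp [Jint]
  have hJ := Jlower hγ0 hγ1 m
  rw [hsub] at hmono
  calc c * m ≤ Jint γ m - 1 := by rw [hc]; push_cast; nlinarith [hJ]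
    _ ≤ ∫ x in (0:ℝ)..1, F x := hmono
end

section
/- Fix γ ∈ (0,1). For n ≥ 1 define ρ_n : ℝ → ℝ by ρ_n(x) = 0 if ⌊4^n x⌋ ≡ 0 or 3 (mod 4), ρ_n(x) = 1 if ⌊4^n x⌋ ≡ 1 (mod 4), and ρ_n(x) = −1 if ⌊4^n x⌋ ≡ 2 (mod 4), and set v_n(x) = Π_{k=1}^n (1 + γ ρ_{2k−1}(x)). Then for every m ≥ 1, ∫_0^1 |Σ_{n=1}^m ρ_{2n}(x) v_n(x)| dx ≥ (1/4) ∫_0^1 max_{1 ≤ n ≤ m} v_n(x) dx. -/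
open Set

noncomputable def epsF : Fin 4 → ℝ := fun v => if v.val = 1 then 1 else if v.val = 2 then -1 else 0

lemma finvals : ((0:Fin 4):ℕ) = 0 ∧ ((1:Fin 4):ℕ) = 1 ∧ ((2:Fin 4):ℕ) = 2 ∧ ((3:Fin 4):ℕ) = 3 := by
  refine ⟨rfl, rfl, rfl, rfl⟩

lemma epsF_sum : ∑ v : Fin 4, epsF v = 0 := by
  simp [Fin.sum_univ_four, epsF, finvals.1, finvals.2.1, finvals.2.2.1, finvals.2.2.2]

lemma epsF_abs_sum : ∑ v : Fin 4, |epsF v| = 2 := by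
  simp [Fin.sum_univ_four, epsF, finvals.1, finvals.2.1, finvals.2.2.1, finvals.2.2.2]
  norm_num

lemma sum_eval {ι : Type*} [Fintype ι] [DecidableEq ι] (i : ι) (h : Fin 4 → ℝ) :
    ∑ g : ι → Fin 4, h (g i) = 4 ^ (Fintype.card ι - 1) * ∑ v, h v := by
  rw [← (Equiv.funSplitAt i (Fin 4)).symm.sum_comp (fun g => h (g i))]
  rw [Fintype.sum_prod_type]
  have hcard : Fintype.card ({ j : ι // j ≠ i } → Fin 4) = 4 ^ (Fintype.card ι - 1) := by
    rw [Fintype.card_fun, Fintype.card_fin]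
    congr 1
    rw [Fintype.card_subtype_compl, Fintype.card_subtype_eq]
  calc ∑ t : Fin 4, ∑ g : { j : ι // j ≠ i } → Fin 4,
        h ((Equiv.funSplitAt i (Fin 4)).symm (t, g) i)
      = ∑ t : Fin 4, ∑ _g : { j : ι // j ≠ i } → Fin 4, h t := by
        refine Finset.sum_congr rfl fun t _ => Finset.sum_congr rfl fun g _ => ?_
        congr 1
        simp [Equiv.funSplitAt, Equiv.piSplitAt]
    _ = 4 ^ (Fintype.card ι - 1) * ∑ v, h v := by
        simp [Finset.sum_const, hcard]
        rw [Finset.mul_sum]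

lemma sum_split {m : ℕ} (f : Fin m → ℝ) (i₀ : Fin m) :
    ∑ i, f i = f i₀ + ∑ i : {j : Fin m // j ≠ i₀}, f i.val := by
  rw [Finset.sum_eq_add_sum_sdiff_singleton_of_mem (Finset.mem_univ i₀)]
  congr 1
  rw [Finset.sum_subtype (Finset.univ \ {i₀}) (p := fun j => j ≠ i₀) (by simp) f]

lemma key {m : ℕ} (a : Fin m → ℝ) (ha : ∀ i, 0 ≤ a i) (i₀ : Fin m) :
    2 * 4 ^ (m - 1) * a i₀ ≤ ∑ e : Fin m → Fin 4, |∑ i, epsF (e i) * a i| := by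
  rw [← (Equiv.funSplitAt i₀ (Fin 4)).symm.sum_comp
    (fun e => |∑ i, epsF (e i) * a i|), Fintype.sum_prod_type]
  have hcard1 : Fintype.card { j : Fin m // j ≠ i₀ } = m - 1 := by
    rw [Fintype.card_subtype_compl, Fintype.card_subtype_eq, Fintype.card_fin]
  have hcard : Fintype.card ({ j : Fin m // j ≠ i₀ } → Fin 4) = 4 ^ (m - 1) := by
    rw [Fintype.card_fun, Fintype.card_fin, hcard1]
  have heval : ∀ (t : Fin 4) (g : { j : Fin m // j ≠ i₀ } → Fin 4),
      (∑ i, epsF (((Equiv.funSplitAt i₀ (Fin 4)).symm (t, g)) i) * a i)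
        = epsF t * a i₀ + ∑ i : { j : Fin m // j ≠ i₀ }, epsF (g i) * a i.val := by
    intro t g
    rw [sum_split (fun i => epsF (((Equiv.funSplitAt i₀ (Fin 4)).symm (t, g)) i) * a i) i₀]
    congr 1
    · congr 1
      congr 1
      simp [Equiv.funSplitAt, Equiv.piSplitAt]
    · refine Finset.sum_congr rfl fun i _ => ?_
      congr 2
      simp [Equiv.funSplitAt, Equiv.piSplitAt, i.2]
  calc 2 * 4 ^ (m - 1) * a i₀
      = ∑ t : Fin 4, 4 ^ (m - 1) * (|epsF t| * a i₀) := by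
        rw [← Finset.mul_sum, ← Finset.sum_mul, epsF_abs_sum]; ring
    _ ≤ ∑ t : Fin 4, ∑ g : { j : Fin m // j ≠ i₀ } → Fin 4,
        |∑ i, epsF (((Equiv.funSplitAt i₀ (Fin 4)).symm (t, g)) i) * a i| := by
        refine Finset.sum_le_sum fun t _ => ?_
        have h1 : |∑ g : { j : Fin m // j ≠ i₀ } → Fin 4,
            (epsF t * a i₀ + ∑ i : { j : Fin m // j ≠ i₀ }, epsF (g i) * a i.val)|
            ≤ ∑ g : { j : Fin m // j ≠ i₀ } → Fin 4,
              |epsF t * a i₀ + ∑ i : { j : Fin m // j ≠ i₀ }, epsF (g i) * a i.val| :=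
          Finset.abs_sum_le_sum_abs _ _
    -- compute the inner total sum
        have h2 : ∑ g : { j : Fin m // j ≠ i₀ } → Fin 4,
            (epsF t * a i₀ + ∑ i : { j : Fin m // j ≠ i₀ }, epsF (g i) * a i.val)
            = 4 ^ (m - 1) * (epsF t * a i₀) := by
          rw [Finset.sum_add_distrib, Finset.sum_const]
          have h3 : ∑ g : { j : Fin m // j ≠ i₀ } → Fin 4,
              ∑ i : { j : Fin m // j ≠ i₀ }, epsF (g i) * a i.val = 0 := by
            rw [Finset.sum_comm]
            refine Finset.sum_eq_zero fun i _ => ?_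
            rw [← Finset.sum_mul, sum_eval i epsF, epsF_sum, mul_zero, zero_mul]
          rw [h3, add_zero, Finset.card_univ, hcard, nsmul_eq_mul]
          push_cast
          ring
        calc 4 ^ (m - 1) * (|epsF t| * a i₀)
            = |(4 : ℝ) ^ (m - 1) * (epsF t * a i₀)| := by
              rw [abs_mul, abs_mul, abs_of_nonneg (ha i₀),
                abs_of_nonneg (by positivity : (0:ℝ) ≤ 4 ^ (m - 1))]
          _ ≤ ∑ g : { j : Fin m // j ≠ i₀ } → Fin 4,
              |epsF t * a i₀ + ∑ i : { j : Fin m // j ≠ i₀ }, epsF (g i) * a i.val| := by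
              rw [← h2]; exact h1
          _ = ∑ g : { j : Fin m // j ≠ i₀ } → Fin 4,
              |∑ i, epsF (((Equiv.funSplitAt i₀ (Fin 4)).symm (t, g)) i) * a i| :=
            Finset.sum_congr rfl fun g _ => by rw [heval]
    _ = ∑ t : Fin 4, ∑ g : { j : Fin m // j ≠ i₀ } → Fin 4,
        |∑ i, epsF (((Equiv.funSplitAt i₀ (Fin 4)).symm (t, g)) i) * a i| := rfl


def mergeOE (m : ℕ) (p : (Fin m → Fin 4) × (Fin m → Fin 4)) : Fin (2 * m) → Fin 4 :=
  fun q => if q.val % 2 = 0 then p.2 ⟨q.val / 2, by omega⟩ else p.1 ⟨q.val / 2, by omega⟩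

lemma mergeOE_even (m : ℕ) (p) (q : Fin (2 * m)) (i : Fin m) (h : q.val = 2 * i.val) :
    mergeOE m p q = p.2 i := by
  unfold mergeOE
  rw [if_pos (by omega)]
  exact congrArg p.2 (Fin.ext (show q.val / 2 = i.val by omega))

lemma mergeOE_odd (m : ℕ) (p) (q : Fin (2 * m)) (i : Fin m) (h : q.val = 2 * i.val + 1) :
    mergeOE m p q = p.1 i := by
  unfold mergeOE
  rw [if_neg (by omega)]
  exact congrArg p.1 (Fin.ext (show q.val / 2 = i.val by omega))

lemma mergeOE_bij (m : ℕ) : Function.Bijective (mergeOE m) := by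
  rw [Function.bijective_iff_has_inverse]
  refine ⟨fun d => (fun i => d ⟨2 * i.val + 1, by omega⟩, fun i => d ⟨2 * i.val, by omega⟩),
    fun p => ?_, fun d => ?_⟩
  · ext i
    · exact congrArg Fin.val (mergeOE_odd m p _ i rfl)
    · exact congrArg Fin.val (mergeOE_even m p _ i rfl)
  · funext q
    by_cases h : q.val % 2 = 0
    · have h2 : q.val = 2 * ((⟨q.val / 2, by omega⟩ : Fin m) : ℕ) := by
        simp only [Fin.val_mk]; omega
      rw [mergeOE_even m _ q ⟨q.val / 2, by omega⟩ h2]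
      exact congrArg d (Fin.ext (show 2 * (q.val / 2) = q.val by omega))
    · have h2 : q.val = 2 * ((⟨q.val / 2, by omega⟩ : Fin m) : ℕ) + 1 := by
        simp only [Fin.val_mk]; omega
      rw [mergeOE_odd m _ q ⟨q.val / 2, by omega⟩ h2]
      exact congrArg d (Fin.ext (show 2 * (q.val / 2) + 1 = q.val by omega))


lemma floor_cell {K j k : ℕ} {x : ℝ} (hj : (j : ℝ) ≤ 4 ^ K * x) (hj' : 4 ^ K * x < (j : ℝ) + 1)
    (hk : k ≤ K) : ⌊(4 : ℝ) ^ k * x⌋ = (j / 4 ^ (K - k) : ℕ) := by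
  set q : ℕ := j / 4 ^ (K - k) with hq
  have hp : (4 : ℝ) ^ (K - k) * 4 ^ k = 4 ^ K := by
    rw [← pow_add]
    congr 1
    omega
  have hP : (0:ℝ) < 4 ^ (K - k) := by positivity
  have hPn : 0 < 4 ^ (K - k) := Nat.pow_pos (by norm_num)
  have hq1 : q * 4 ^ (K - k) ≤ j := Nat.div_mul_le_self j _
  have hq2 : j < (q + 1) * 4 ^ (K - k) := by
    have h1 := Nat.div_add_mod j (4 ^ (K - k))
    have h2 := Nat.mod_lt j hPn
    rw [hq]
    nlinarith [h1, h2]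
  have hx : (4 : ℝ) ^ K * x = 4 ^ k * x * 4 ^ (K - k) := by rw [← hp]; ring
  rw [Int.floor_eq_iff]
  constructor
  · push_cast
    have h1 : (q : ℝ) * 4 ^ (K - k) ≤ (j : ℝ) := by exact_mod_cast hq1
    have h3 : (q : ℝ) * 4 ^ (K - k) ≤ 4 ^ k * x * 4 ^ (K - k) := by
      rw [← hx]; linarith
    exact le_of_mul_le_mul_right h3 hP
  · push_cast
    have h2 : (j : ℝ) + 1 ≤ ((q : ℝ) + 1) * 4 ^ (K - k) := by
      have h2' : j + 1 ≤ (q + 1) * 4 ^ (K - k) := hq2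
      exact_mod_cast h2'
    have h3 : 4 ^ k * x * 4 ^ (K - k) < ((q : ℝ) + 1) * 4 ^ (K - k) := by
      rw [← hx]; linarith
    exact lt_of_mul_lt_mul_right h3 hP.le

lemma rho_cell {K j k : ℕ} {x : ℝ} (hj : (j : ℝ) ≤ 4 ^ K * x) (hj' : 4 ^ K * x < (j : ℝ) + 1)
    (hk : k ≤ K) :
    rho k x = epsF ⟨j / 4 ^ (K - k) % 4, Nat.mod_lt _ (by norm_num)⟩ := by
  unfold rho epsF
  rw [floor_cell hj hj' hk]
  have h1 : ((j / 4 ^ (K - k) : ℕ) : ℤ) % 4 = 1 ↔ j / 4 ^ (K - k) % 4 = 1 := by omega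
  have h2 : ((j / 4 ^ (K - k) : ℕ) : ℤ) % 4 = 2 ↔ j / 4 ^ (K - k) % 4 = 2 := by omega
  simp only [Fin.val_mk, h1, h2]

open MeasureTheory in
lemma integrable_cell {u v : ℝ} (huv : u ≤ v) {f : ℝ → ℝ} {c : ℝ}
    (hf : ∀ x, u ≤ x → x < v → f x = c) :
    f =ᵐ[volume.restrict (Set.Ioc u v)] (fun _ => c) := by
  have hv : ∀ᵐ x : ℝ ∂(volume : Measure ℝ), x ∉ ({v} : Set ℝ) :=
    measure_eq_zero_iff_ae_notMem.mp (measure_singleton v)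
  refine (ae_restrict_iff' measurableSet_Ioc).mpr ?_
  filter_upwards [hv] with x hx hmem
  exact hf x hmem.1.le (lt_of_le_of_ne hmem.2 (by simpa using hx))

open MeasureTheory in
lemma integral_cell {u v : ℝ} (huv : u ≤ v) {f : ℝ → ℝ} {c : ℝ}
    (hf : ∀ x, u ≤ x → x < v → f x = c) :
    IntervalIntegrable f volume u v ∧ ∫ x in u..v, f x = (v - u) * c := by
  have hae := integrable_cell huv hf
  constructor
  · rw [intervalIntegrable_iff_integrableOn_Ioc_of_le huv]
    exact (integrableOn_const (hs := by simp)).congr hae.symm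
  · rw [intervalIntegral.integral_of_le huv, integral_congr_ae hae, setIntegral_const,
      Real.volume_real_Ioc_of_le huv, smul_eq_mul]

open MeasureTheory in
lemma integral_eq_sum (N : ℕ) (hN : 0 < N) (f : ℝ → ℝ)
    (hf : ∀ j, j < N → ∀ x, (j : ℝ) / N ≤ x → x < ((j : ℝ) + 1) / N → f x = f (j / N)) :
    ∫ x in (0:ℝ)..1, f x = ∑ j ∈ Finset.range N, (N : ℝ)⁻¹ * f (j / N) := by
  have hNR : (0:ℝ) < N := by exact_mod_cast hN
  set a : ℕ → ℝ := fun j => (j : ℝ) / N with ha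
  have hcast : ∀ j : ℕ, a (j + 1) = ((j : ℝ) + 1) / N := by
    intro j
    simp only [ha]
    push_cast
    ring
  have hpiece : ∀ j, j < N → IntervalIntegrable f volume (a j) (a (j + 1)) ∧
      ∫ x in a j..a (j + 1), f x = (N : ℝ)⁻¹ * f (a j) := by
    intro j hj
    have huv : a j ≤ a (j + 1) := by
      rw [hcast]
      exact (div_le_div_iff_of_pos_right hNR).mpr (by linarith)
    have hf' : ∀ x, a j ≤ x → x < a (j + 1) → f x = f (a j) := by
      intro x h1 h2
      exact hf j hj x h1 (by rw [← hcast j]; exact h2)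
    obtain ⟨hint, hval⟩ := integral_cell huv hf'
    refine ⟨hint, ?_⟩
    rw [hval, hcast]
    have : ((j : ℝ) + 1) / N - (j : ℝ) / N = (N : ℝ)⁻¹ := by
      field_simp
      ring
    rw [this]
  have hsum := intervalIntegral.sum_integral_adjacent_intervals (μ := volume) (a := a)
    (f := f) (n := N) (fun k hk => (hpiece k hk).1)
  have h0 : a 0 = 0 := by simp [ha]
  have h1 : a N = 1 := by
    simp only [ha]
    exact div_self hNR.ne'
  rw [h0, h1] at hsum
  rw [← hsum]
  exact Finset.sum_congr rfl fun j hj => (hpiece j (Finset.mem_range.mp hj)).2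

lemma digit_eval {m : ℕ} (d : Fin (2 * m) → Fin 4) (p : Fin (2 * m)) :
    (d p : ℕ) = (finFunctionFinEquiv d : ℕ) / 4 ^ (p : ℕ) % 4 := by
  conv_lhs => rw [← finFunctionFinEquiv.symm_apply_apply d]
  rfl

lemma cell_bounds {m : ℕ} (d : Fin (2 * m) → Fin 4) :
    ((finFunctionFinEquiv d : ℕ) : ℝ) ≤
      4 ^ (2 * m) * (((finFunctionFinEquiv d : ℕ) : ℝ) / ((4 ^ (2 * m) : ℕ) : ℝ)) ∧
    4 ^ (2 * m) * (((finFunctionFinEquiv d : ℕ) : ℝ) / ((4 ^ (2 * m) : ℕ) : ℝ)) <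
      ((finFunctionFinEquiv d : ℕ) : ℝ) + 1 := by
  have hcast : ((4 ^ (2 * m) : ℕ) : ℝ) = 4 ^ (2 * m) := by push_cast; norm_num
  have hpos : (0 : ℝ) < 4 ^ (2 * m) := by positivity
  rw [hcast, mul_div_cancel₀ _ hpos.ne']
  exact ⟨le_refl _, by linarith⟩

lemma rho_at {m : ℕ} (d : Fin (2 * m) → Fin 4) (k : ℕ) (hk2 : k ≤ 2 * m)
    (hidx : 2 * m - k < 2 * m) :
    rho k (((finFunctionFinEquiv d : ℕ) : ℝ) / ((4 ^ (2 * m) : ℕ) : ℝ)) =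
      epsF (d ⟨2 * m - k, hidx⟩) := by
  obtain ⟨hb1, hb2⟩ := cell_bounds d
  rw [rho_cell hb1 hb2 hk2]
  congr 1
  refine (Fin.ext ?_).symm
  rw [digit_eval d ⟨2 * m - k, hidx⟩]

lemma abs_epsF_le (v : Fin 4) : |epsF v| ≤ 1 := by
  unfold epsF
  split_ifs <;> norm_num

noncomputable def cfun (γ : ℝ) (m : ℕ) [NeZero m] (o : Fin m → Fin 4) (n : ℕ) : ℝ :=
  ∏ k ∈ Finset.Icc 1 n, (1 + γ * epsF (o ⟨(m - k) % m, Nat.mod_lt _ (NeZero.pos m)⟩))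

lemma cfun_pos {γ : ℝ} (hγ0 : 0 < γ) (hγ1 : γ < 1) (m : ℕ) [NeZero m] (o : Fin m → Fin 4)
    (n : ℕ) : 0 < cfun γ m o n := by
  refine Finset.prod_pos fun k _ => ?_
  have h := abs_epsF_le (o ⟨(m - k) % m, Nat.mod_lt _ (NeZero.pos m)⟩)
  rw [abs_le] at h
  nlinarith [h.1, h.2]

lemma vweight_at {γ : ℝ} {m : ℕ} [NeZero m] (o e : Fin m → Fin 4) (n : ℕ)
    (hn : n ∈ Finset.Icc 1 m) :
    vweight γ n (((finFunctionFinEquiv (mergeOE m (o, e)) : ℕ) : ℝ) / ((4 ^ (2 * m) : ℕ) : ℝ))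
      = cfun γ m o n := by
  obtain ⟨hn1, hn2⟩ := Finset.mem_Icc.mp hn
  unfold vweight cfun
  refine Finset.prod_congr rfl fun k hk => ?_
  obtain ⟨hk1, hk2⟩ := Finset.mem_Icc.mp hk
  have h1 : 2 * k - 1 ≤ 2 * m := by omega
  have h2 : 2 * m - (2 * k - 1) < 2 * m := by omega
  rw [rho_at (mergeOE m (o, e)) (2 * k - 1) h1 h2]
  have hmod : (m - k) % m = m - k := Nat.mod_eq_of_lt (by omega)
  exact congrArg (fun v => 1 + γ * epsF v) (mergeOE_odd m (o, e) ⟨2 * m - (2 * k - 1), h2⟩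
    ⟨(m - k) % m, Nat.mod_lt _ (NeZero.pos m)⟩ (by simp only [Fin.val_mk]; rw [hmod]; omega))

lemma sum_at {γ : ℝ} {m : ℕ} [NeZero m] (o e : Fin m → Fin 4) :
    ∑ n ∈ Finset.Icc 1 m,
        rho (2 * n) (((finFunctionFinEquiv (mergeOE m (o, e)) : ℕ) : ℝ) /
          ((4 ^ (2 * m) : ℕ) : ℝ)) *
        vweight γ n (((finFunctionFinEquiv (mergeOE m (o, e)) : ℕ) : ℝ) /
          ((4 ^ (2 * m) : ℕ) : ℝ))
      = ∑ i : Fin m, epsF (e i) * cfun γ m o (m - (i : ℕ)) := by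
  refine Finset.sum_bij' (fun n _ => (⟨(m - n) % m, Nat.mod_lt _ (NeZero.pos m)⟩ : Fin m))
    (fun i _ => m - (i : ℕ)) ?_ ?_ ?_ ?_ ?_
  · intro n hn
    exact Finset.mem_univ _
  · intro i _
    have := i.2
    exact Finset.mem_Icc.mpr ⟨by omega, by omega⟩
  · intro n hn
    obtain ⟨hn1, hn2⟩ := Finset.mem_Icc.mp hn
    dsimp only
    rw [Nat.mod_eq_of_lt (by omega)]
    omega
  · intro i _
    have := i.2
    refine Fin.ext ?_
    simp only [Fin.val_mk]
    rw [Nat.mod_eq_of_lt (by omega)]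
    omega
  · intro n hn
    obtain ⟨hn1, hn2⟩ := Finset.mem_Icc.mp hn
    have h1 : 2 * n ≤ 2 * m := by omega
    have h2 : 2 * m - 2 * n < 2 * m := by omega
    rw [vweight_at o e n hn, rho_at (mergeOE m (o, e)) (2 * n) h1 h2]
    have hmod : (m - n) % m = m - n := Nat.mod_eq_of_lt (by omega)
    have hme : mergeOE m (o, e) ⟨2 * m - 2 * n, h2⟩
        = e ⟨(m - n) % m, Nat.mod_lt _ (NeZero.pos m)⟩ :=
      mergeOE_even m (o, e) _ _ (by simp only [Fin.val_mk]; rw [hmod]; omega)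
    rw [hme]
    congr 2
    simp only [Fin.val_mk]
    rw [hmod]
    omega

lemma per_o {γ : ℝ} (hγ0 : 0 < γ) (hγ1 : γ < 1) {m : ℕ} [NeZero m] (hm : 1 ≤ m)
    (o : Fin m → Fin 4) :
    (4 : ℝ) ^ m * ((1 / 4) * (Finset.Icc 1 m).sup' (Finset.nonempty_Icc.mpr hm) (cfun γ m o)) ≤
      ∑ e : Fin m → Fin 4, |∑ i : Fin m, epsF (e i) * cfun γ m o (m - (i : ℕ))| := by
  obtain ⟨n₀, hn₀, hmax⟩ := Finset.exists_mem_eq_sup' (Finset.nonempty_Icc.mpr hm) (cfun γ m o)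
  obtain ⟨hn₀1, hn₀2⟩ := Finset.mem_Icc.mp hn₀
  set a : Fin m → ℝ := fun i => cfun γ m o (m - (i : ℕ)) with ha'
  have ha : ∀ i, 0 ≤ a i := fun i => (cfun_pos hγ0 hγ1 m o _).le
  set i₀ : Fin m := ⟨(m - n₀) % m, Nat.mod_lt _ (NeZero.pos m)⟩ with hi₀'
  have hi₀ : a i₀ = cfun γ m o n₀ := by
    simp only [ha', hi₀', Fin.val_mk]
    rw [Nat.mod_eq_of_lt (by omega)]
    congr 1
    omega
  have hk := key a ha i₀
  rw [hmax, ← hi₀]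
  refine le_trans ?_ hk
  have h4 : (4 : ℝ) ^ m = 4 * 4 ^ (m - 1) := by
    rw [← pow_succ']
    congr 1
    omega
  rw [h4]
  nlinarith [ha i₀, pow_pos (by norm_num : (0:ℝ) < 4) (m - 1)]

/-- For `γ ∈ (0,1)` and every `m ≥ 1`,
`∫_0^1 |Σ_{n=1}^m ρ_{2n}(x) v_n(x)| dx ≥ (1/4) ∫_0^1 max_{1 ≤ n ≤ m} v_n(x) dx`. -/
theorem integral_abs_sum_lower_bound :
    ∀ γ : ℝ, 0 < γ → γ < 1 → ∀ m : ℕ, ∀ hm : 1 ≤ m,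
      (1 / 4) * (∫ x in (0:ℝ)..1,
          (Finset.Icc 1 m).sup' (Finset.nonempty_Icc.mpr hm) (fun n => vweight γ n x)) ≤
        ∫ x in (0:ℝ)..1, |∑ n ∈ Finset.Icc 1 m, rho (2 * n) x * vweight γ n x| := by
  intro γ hγ0 hγ1 m hm
  have : NeZero m := ⟨by omega⟩
  have hNpos : 0 < 4 ^ (2 * m) := Nat.pow_pos (by norm_num)
  have hNR : ((4 ^ (2 * m) : ℕ) : ℝ) = 4 ^ (2 * m) := by push_cast; norm_num
  have hNRpos : (0 : ℝ) < ((4 ^ (2 * m) : ℕ) : ℝ) := by rw [hNR]; positivity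
  -- constancy of rho on cells
  have hrho : ∀ j : ℕ, j < 4 ^ (2 * m) → ∀ x : ℝ,
      (j : ℝ) / ((4 ^ (2 * m) : ℕ) : ℝ) ≤ x → x < ((j : ℝ) + 1) / ((4 ^ (2 * m) : ℕ) : ℝ) →
      ∀ k, k ≤ 2 * m → rho k x = rho k ((j : ℝ) / ((4 ^ (2 * m) : ℕ) : ℝ)) := by
    intro j hj x h1 h2 k hk
    have hb1 : (j : ℝ) ≤ 4 ^ (2 * m) * x := by
      have := (div_le_iff₀ hNRpos).mp h1
      rw [hNR] at this
      linarith
    have hb2 : 4 ^ (2 * m) * x < (j : ℝ) + 1 := by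
      have := (lt_div_iff₀ hNRpos).mp h2
      rw [hNR] at this
      linarith
    have hc1 : (j : ℝ) ≤ 4 ^ (2 * m) * ((j : ℝ) / ((4 ^ (2 * m) : ℕ) : ℝ)) := by
      rw [hNR, mul_div_cancel₀ _ (by positivity : ((4:ℝ) ^ (2 * m)) ≠ 0)]
    have hc2 : 4 ^ (2 * m) * ((j : ℝ) / ((4 ^ (2 * m) : ℕ) : ℝ)) < (j : ℝ) + 1 := by
      rw [hNR, mul_div_cancel₀ _ (by positivity : ((4:ℝ) ^ (2 * m)) ≠ 0)]
      linarith
    rw [rho_cell hb1 hb2 hk, rho_cell hc1 hc2 hk]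
  -- constancy of vweight on cells
  have hvw : ∀ j : ℕ, j < 4 ^ (2 * m) → ∀ x : ℝ,
      (j : ℝ) / ((4 ^ (2 * m) : ℕ) : ℝ) ≤ x → x < ((j : ℝ) + 1) / ((4 ^ (2 * m) : ℕ) : ℝ) →
      ∀ n, n ≤ m → vweight γ n x = vweight γ n ((j : ℝ) / ((4 ^ (2 * m) : ℕ) : ℝ)) := by
    intro j hj x h1 h2 n hn
    unfold vweight
    refine Finset.prod_congr rfl fun k hk => ?_
    obtain ⟨hk1, hk2⟩ := Finset.mem_Icc.mp hk
    rw [hrho j hj x h1 h2 (2 * k - 1) (by omega)]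
  have hIG := integral_eq_sum (4 ^ (2 * m)) hNpos
    (fun x => (Finset.Icc 1 m).sup' (Finset.nonempty_Icc.mpr hm) (fun n => vweight γ n x))
    (by
      intro j hj x h1 h2
      exact Finset.sup'_congr _ rfl fun n hn =>
        hvw j hj x h1 h2 n (Finset.mem_Icc.mp hn).2)
  have hIF := integral_eq_sum (4 ^ (2 * m)) hNpos
    (fun x => |∑ n ∈ Finset.Icc 1 m, rho (2 * n) x * vweight γ n x|)
    (by
      intro j hj x h1 h2
      congr 1
      refine Finset.sum_congr rfl fun n hn => ?_
      obtain ⟨hn1, hn2⟩ := Finset.mem_Icc.mp hn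
      rw [hrho j hj x h1 h2 (2 * n) (by omega), hvw j hj x h1 h2 n hn2])
  rw [hIG, hIF]
  have step1 : ∀ h : ℕ → ℝ, ∑ j ∈ Finset.range (4 ^ (2 * m)), h j =
      ∑ p : (Fin m → Fin 4) × (Fin m → Fin 4), h (finFunctionFinEquiv (mergeOE m p) : ℕ) := by
    intro h
    calc ∑ j ∈ Finset.range (4 ^ (2 * m)), h j
        = ∑ j : Fin (4 ^ (2 * m)), h ↑j := (Fin.sum_univ_eq_sum_range h _).symm
      _ = ∑ d : Fin (2 * m) → Fin 4, h ↑(finFunctionFinEquiv d) :=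
          (Equiv.sum_comp finFunctionFinEquiv (fun j : Fin (4 ^ (2 * m)) => h ↑j)).symm
      _ = ∑ p : (Fin m → Fin 4) × (Fin m → Fin 4), h ↑(finFunctionFinEquiv (mergeOE m p)) :=
          (Fintype.sum_bijective (mergeOE m) (mergeOE_bij m) _ _ (fun p => rfl)).symm
  have main : (1 / 4) * ∑ j ∈ Finset.range (4 ^ (2 * m)), ((4 ^ (2 * m) : ℕ) : ℝ)⁻¹ *
      (Finset.Icc 1 m).sup' (Finset.nonempty_Icc.mpr hm)
        (fun n => vweight γ n ((j : ℝ) / ((4 ^ (2 * m) : ℕ) : ℝ))) ≤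
      ∑ j ∈ Finset.range (4 ^ (2 * m)), ((4 ^ (2 * m) : ℕ) : ℝ)⁻¹ *
        |∑ n ∈ Finset.Icc 1 m, rho (2 * n) ((j : ℝ) / ((4 ^ (2 * m) : ℕ) : ℝ)) *
          vweight γ n ((j : ℝ) / ((4 ^ (2 * m) : ℕ) : ℝ))| := by
    rw [step1, step1, Finset.mul_sum, Fintype.sum_prod_type, Fintype.sum_prod_type]
    refine Finset.sum_le_sum fun o _ => ?_
    have hGoe : ∀ e : Fin m → Fin 4,
        (Finset.Icc 1 m).sup' (Finset.nonempty_Icc.mpr hm)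
          (fun n => vweight γ n (((finFunctionFinEquiv (mergeOE m (o, e)) : ℕ) : ℝ) /
            ((4 ^ (2 * m) : ℕ) : ℝ))) =
        (Finset.Icc 1 m).sup' (Finset.nonempty_Icc.mpr hm) (cfun γ m o) :=
      fun e => Finset.sup'_congr _ rfl fun n hn => vweight_at o e n hn
    calc ∑ e : Fin m → Fin 4, (1 / 4) * (((4 ^ (2 * m) : ℕ) : ℝ)⁻¹ *
          (Finset.Icc 1 m).sup' (Finset.nonempty_Icc.mpr hm)
            (fun n => vweight γ n (((finFunctionFinEquiv (mergeOE m (o, e)) : ℕ) : ℝ) /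
              ((4 ^ (2 * m) : ℕ) : ℝ))))
        = ∑ _e : Fin m → Fin 4, ((4 ^ (2 * m) : ℕ) : ℝ)⁻¹ *
            ((1 / 4) * (Finset.Icc 1 m).sup' (Finset.nonempty_Icc.mpr hm) (cfun γ m o)) := by
          refine Finset.sum_congr rfl fun e _ => ?_
          rw [hGoe e]
          ring
      _ = ((4 ^ (2 * m) : ℕ) : ℝ)⁻¹ * ((4 : ℝ) ^ m *
            ((1 / 4) * (Finset.Icc 1 m).sup' (Finset.nonempty_Icc.mpr hm) (cfun γ m o))) := by
          rw [Finset.sum_const, Finset.card_univ, Fintype.card_fun, Fintype.card_fin,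
            Fintype.card_fin, nsmul_eq_mul]
          push_cast
          ring
      _ ≤ ((4 ^ (2 * m) : ℕ) : ℝ)⁻¹ *
            ∑ e : Fin m → Fin 4, |∑ i : Fin m, epsF (e i) * cfun γ m o (m - (i : ℕ))| := by
          refine mul_le_mul_of_nonneg_left ?_ (by positivity)
          exact per_o hγ0 hγ1 hm o
      _ = ∑ e : Fin m → Fin 4, ((4 ^ (2 * m) : ℕ) : ℝ)⁻¹ *
            |∑ i : Fin m, epsF (e i) * cfun γ m o (m - (i : ℕ))| := Finset.mul_sum _ _ _
      _ = ∑ e : Fin m → Fin 4, ((4 ^ (2 * m) : ℕ) : ℝ)⁻¹ *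
            |∑ n ∈ Finset.Icc 1 m,
              rho (2 * n) (((finFunctionFinEquiv (mergeOE m (o, e)) : ℕ) : ℝ) /
                ((4 ^ (2 * m) : ℕ) : ℝ)) *
              vweight γ n (((finFunctionFinEquiv (mergeOE m (o, e)) : ℕ) : ℝ) /
                ((4 ^ (2 * m) : ℕ) : ℝ))| := by
          refine Finset.sum_congr rfl fun e _ => ?_
          rw [sum_at o e]
  exact main
end
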